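/- Let G be a connected simple graph of order n with diam(G) = 2 and β(G) = n − 3, with twin graph G*, and let v be a vertex of G such that Γ_2^*(v^*) ≠ ∅ and Γ_1(v) is homogeneous. If |R_1^*(v^*)| = 2 and Γ_2(v) is homogeneous, then G* satisfies one of the structures G_4, G_5, G_6 or G_7. Structure G_4: G* ≅ C_5 and every vertex is of type (1). Structure G_5: G* is C_5 with one chord, the two adjacent degree-2 vertices are of type (1) and the other vertices are of type (1K). Structure G_6: G* is C_5 with two adjacent chords (so G* has one degree-4 vertex), the degree-4 vertex is of any type and the other vertices are of type (1K); moreover, no two non-adjacent vertices are both of type (K), and no two adjacent vertices are of different types (K) and (N). Structure G_7: G* is the kite (K_4 minus an edge) with a pendant edge attached to a degree-3 vertex; the leaf is of type (1), the degree-4 and degree-3 vertices are of type (1K), one degree-2 vertex is of type (K) and the other degree-2 vertex is of type (1). -/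

import Mathlib

namespace PaperMetricDim

open SimpleGraph

variable {V : Type*}

/-- A set `W` of vertices resolves the graph `G`: any two distinct vertices have
different distance to some vertex of `W`. -/
def Resolves (G : SimpleGraph V) (W : Set V) : Prop :=
  ∀ u v : V, u ≠ v → ∃ w ∈ W, G.dist u w ≠ G.dist v w

/-- The metric dimension of `G`: the minimum cardinality of a resolving set. -/
noncomputable def metricDim (G : SimpleGraph V) : ℕ :=
  sInf {k : ℕ | ∃ W : Set V, Resolves G W ∧ W.ncard = k}

/-- `G` is connected and has diameter exactly `d`. -/
def diamEq (G : SimpleGraph V) (d : ℕ) : Prop :=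
  G.Connected ∧ (∀ u v : V, G.dist u v ≤ d) ∧ ∃ u v : V, G.dist u v = d

/-- A set of vertices is homogeneous if it induces a complete or an empty subgraph. -/
def Homogeneous (G : SimpleGraph V) (S : Set V) : Prop :=
  (∀ a ∈ S, ∀ b ∈ S, a ≠ b → G.Adj a b) ∨ (∀ a ∈ S, ∀ b ∈ S, ¬ G.Adj a b)

/-- Two distinct vertices are twins: they have the same neighbours apart from
each other. -/
def Twins (G : SimpleGraph V) (u v : V) : Prop :=
  u ≠ v ∧ G.neighborSet u \ {v} = G.neighborSet v \ {u}

/-- The twin equivalence relation: equal or twins. -/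
def twinRel (G : SimpleGraph V) (u v : V) : Prop := u = v ∨ Twins G u v

/-- The twin class of a vertex. -/
def twinClass (G : SimpleGraph V) (v : V) : Set V := {u : V | twinRel G v u}

/-- The vertices of the twin graph: twin equivalence classes. -/
def TwinVertex (G : SimpleGraph V) : Type _ := {S : Set V // ∃ v : V, S = twinClass G v}

/-- The twin graph `G*` of `G`: twin classes, two distinct classes being
adjacent iff (some, equivalently all) representatives are adjacent in `G`. -/
def twinGraph (G : SimpleGraph V) : SimpleGraph (TwinVertex G) where
  Adj A B := A ≠ B ∧ ∃ a ∈ A.1, ∃ b ∈ B.1, G.Adj a b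
  symm := by
    constructor
    rintro A B ⟨hne, a, ha, b, hb, hab⟩
    exact ⟨hne.symm, b, hb, a, ha, hab.symm⟩
  loopless := by constructor; rintro A ⟨hne, -⟩; exact hne rfl

/-- The twin class of `v`, as a vertex of the twin graph. -/
def cls (G : SimpleGraph V) (v : V) : TwinVertex G := ⟨twinClass G v, v, rfl⟩

/-- A twin-graph vertex of type (1): a singleton class. -/
def typeOne (G : SimpleGraph V) (A : TwinVertex G) : Prop := ∃ v : V, A.1 = {v}

/-- A twin-graph vertex of type (K): a class with at least two vertices inducing
a complete subgraph. -/
def typeK (G : SimpleGraph V) (A : TwinVertex G) : Prop :=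
  A.1.Nontrivial ∧ ∀ a ∈ A.1, ∀ b ∈ A.1, a ≠ b → G.Adj a b

/-- A twin-graph vertex of type (N): a class with at least two vertices inducing
an empty subgraph. -/
def typeN (G : SimpleGraph V) (A : TwinVertex G) : Prop :=
  A.1.Nontrivial ∧ ∀ a ∈ A.1, ∀ b ∈ A.1, ¬ G.Adj a b

/-- Type (1K): type (1) or type (K). -/
def type1K (G : SimpleGraph V) (A : TwinVertex G) : Prop := typeOne G A ∨ typeK G A

/-- Type (1N): type (1) or type (N). -/
def type1N (G : SimpleGraph V) (A : TwinVertex G) : Prop := typeOne G A ∨ typeN G A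

/-- Type (KN): type (K) or type (N). -/
def typeKN (G : SimpleGraph V) (A : TwinVertex G) : Prop := typeK G A ∨ typeN G A

/-- `Γ_i(v)`: the set of vertices at distance `i` from `v`. -/
def Gamma (G : SimpleGraph V) (i : ℕ) (v : V) : Set V := {u : V | G.dist u v = i}

/-- `Γ_i^*(v^*)`: the set of twin-graph vertices at distance `i` from `v^*`. -/
def GammaStar (G : SimpleGraph V) (i : ℕ) (v : V) : Set (TwinVertex G) :=
  {A : TwinVertex G | (twinGraph G).dist A (cls G v) = i}

/-- `R_1(v)`: neighbours of `v` having a neighbour at distance 2 from `v`. -/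
def R1 (G : SimpleGraph V) (v : V) : Set V :=
  {x ∈ Gamma G 1 v | ∃ y ∈ Gamma G 2 v, G.Adj x y}

/-- `R_2(v) = Γ_1(v) \ R_1(v)`. -/
def R2 (G : SimpleGraph V) (v : V) : Set V := Gamma G 1 v \ R1 G v

/-- `R_1^*(v^*)`: twin-graph neighbours of `v^*` having a neighbour in `Γ_2^*(v^*)`. -/
def R1Star (G : SimpleGraph V) (v : V) : Set (TwinVertex G) :=
  {A ∈ GammaStar G 1 v | ∃ B ∈ GammaStar G 2 v, (twinGraph G).Adj A B}

/-- `R_2^*(v^*) = Γ_1^*(v^*) \ R_1^*(v^*)`. -/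
def R2Star (G : SimpleGraph V) (v : V) : Set (TwinVertex G) :=
  GammaStar G 1 v \ R1Star G v

/-- `M_1(x) = Γ_1(v) ∩ Γ_1(x)` (for `x ∈ Γ_1(v)`). -/
def M1 (G : SimpleGraph V) (v x : V) : Set V := Gamma G 1 v ∩ Gamma G 1 x

/-- `M_2(x) = Γ_1(v) ∩ Γ_2(x)` (for `x ∈ Γ_1(v)`). -/
def M2 (G : SimpleGraph V) (v x : V) : Set V := Gamma G 1 v ∩ Gamma G 2 x

/-- Structure `G_1`: the twin graph is `K_3` and has at most one vertex of type (1K). -/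
def structG1 (G : SimpleGraph V) : Prop :=
  ∃ a b c : TwinVertex G, a ≠ b ∧ a ≠ c ∧ b ≠ c ∧
    (∀ X : TwinVertex G, X = a ∨ X = b ∨ X = c) ∧
    (twinGraph G).Adj a b ∧ (twinGraph G).Adj a c ∧ (twinGraph G).Adj b c ∧
    (∀ X Y : TwinVertex G, type1K G X → type1K G Y → X = Y)

/-- Structure `G_2`: the twin graph is the path `P_3` with (a) centre of type (N)
and some leaf of type (K), or (b) one leaf of type (K) and the other of type (KN). -/
def structG2 (G : SimpleGraph V) : Prop :=
  ∃ a b c : TwinVertex G, a ≠ b ∧ a ≠ c ∧ b ≠ c ∧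
    (∀ X : TwinVertex G, X = a ∨ X = b ∨ X = c) ∧
    (twinGraph G).Adj a b ∧ (twinGraph G).Adj b c ∧ ¬ (twinGraph G).Adj a c ∧
    ((typeN G b ∧ (typeK G a ∨ typeK G c)) ∨
     (typeK G a ∧ typeKN G c) ∨ (typeK G c ∧ typeKN G a))

/-- Structure `G_3`: the twin graph is the paw, the triangle being `u, p, q` with
the pendant vertex `l` attached to `u`; `p` is of type (N), `q` of type (1K),
`l` of type (1N); and if `q` is of type (K) then neither `l` nor `u` is of type (N). -/
def structG3 (G : SimpleGraph V) : Prop :=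
  ∃ u p q l : TwinVertex G,
    u ≠ p ∧ u ≠ q ∧ u ≠ l ∧ p ≠ q ∧ p ≠ l ∧ q ≠ l ∧
    (∀ X : TwinVertex G, X = u ∨ X = p ∨ X = q ∨ X = l) ∧
    (twinGraph G).Adj u p ∧ (twinGraph G).Adj u q ∧ (twinGraph G).Adj p q ∧
    (twinGraph G).Adj u l ∧ ¬ (twinGraph G).Adj p l ∧ ¬ (twinGraph G).Adj q l ∧
    typeN G p ∧ type1K G q ∧ type1N G l ∧
    (typeK G q → ¬ typeN G l ∧ ¬ typeN G u)

/-- Structure `G_4`: the twin graph is the cycle `C_5` and every vertex is of type (1). -/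
def structG4 (G : SimpleGraph V) : Prop :=
  ∃ v0 v1 v2 v3 v4 : TwinVertex G,
    v0 ≠ v1 ∧ v0 ≠ v2 ∧ v0 ≠ v3 ∧ v0 ≠ v4 ∧ v1 ≠ v2 ∧ v1 ≠ v3 ∧ v1 ≠ v4 ∧
    v2 ≠ v3 ∧ v2 ≠ v4 ∧ v3 ≠ v4 ∧
    (∀ X : TwinVertex G, X = v0 ∨ X = v1 ∨ X = v2 ∨ X = v3 ∨ X = v4) ∧
    (twinGraph G).Adj v0 v1 ∧ (twinGraph G).Adj v1 v2 ∧ (twinGraph G).Adj v2 v3 ∧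
    (twinGraph G).Adj v3 v4 ∧ (twinGraph G).Adj v4 v0 ∧
    ¬ (twinGraph G).Adj v0 v2 ∧ ¬ (twinGraph G).Adj v1 v3 ∧ ¬ (twinGraph G).Adj v2 v4 ∧
    ¬ (twinGraph G).Adj v3 v0 ∧ ¬ (twinGraph G).Adj v4 v1 ∧
    (∀ X : TwinVertex G, typeOne G X)

/-- Structure `G_5`: the twin graph is `C_5` with one chord (cycle `v0 v1 v2 v3 v4`,
chord `v0 v2`); the two adjacent degree-2 vertices `v3, v4` are of type (1), the
other vertices of type (1K). -/
def structG5 (G : SimpleGraph V) : Prop :=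
  ∃ v0 v1 v2 v3 v4 : TwinVertex G,
    v0 ≠ v1 ∧ v0 ≠ v2 ∧ v0 ≠ v3 ∧ v0 ≠ v4 ∧ v1 ≠ v2 ∧ v1 ≠ v3 ∧ v1 ≠ v4 ∧
    v2 ≠ v3 ∧ v2 ≠ v4 ∧ v3 ≠ v4 ∧
    (∀ X : TwinVertex G, X = v0 ∨ X = v1 ∨ X = v2 ∨ X = v3 ∨ X = v4) ∧
    (twinGraph G).Adj v0 v1 ∧ (twinGraph G).Adj v1 v2 ∧ (twinGraph G).Adj v2 v3 ∧
    (twinGraph G).Adj v3 v4 ∧ (twinGraph G).Adj v4 v0 ∧ (twinGraph G).Adj v0 v2 ∧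
    ¬ (twinGraph G).Adj v1 v3 ∧ ¬ (twinGraph G).Adj v1 v4 ∧ ¬ (twinGraph G).Adj v2 v4 ∧
    typeOne G v3 ∧ typeOne G v4 ∧ type1K G v0 ∧ type1K G v1 ∧ type1K G v2

/-- Structure `G_6`: the twin graph is `C_5` with two adjacent chords (cycle
`v0 v1 v2 v3 v4`, chords `v0 v2` and `v0 v3`, so `v0` has degree 4); `v0` is of any
type, the other vertices of type (1K); no two non-adjacent vertices are both of
type (K), and no two adjacent vertices have the different types (K) and (N). -/
def structG6 (G : SimpleGraph V) : Prop :=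
  ∃ v0 v1 v2 v3 v4 : TwinVertex G,
    v0 ≠ v1 ∧ v0 ≠ v2 ∧ v0 ≠ v3 ∧ v0 ≠ v4 ∧ v1 ≠ v2 ∧ v1 ≠ v3 ∧ v1 ≠ v4 ∧
    v2 ≠ v3 ∧ v2 ≠ v4 ∧ v3 ≠ v4 ∧
    (∀ X : TwinVertex G, X = v0 ∨ X = v1 ∨ X = v2 ∨ X = v3 ∨ X = v4) ∧
    (twinGraph G).Adj v0 v1 ∧ (twinGraph G).Adj v1 v2 ∧ (twinGraph G).Adj v2 v3 ∧
    (twinGraph G).Adj v3 v4 ∧ (twinGraph G).Adj v4 v0 ∧ (twinGraph G).Adj v0 v2 ∧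
    (twinGraph G).Adj v0 v3 ∧
    ¬ (twinGraph G).Adj v1 v3 ∧ ¬ (twinGraph G).Adj v1 v4 ∧ ¬ (twinGraph G).Adj v2 v4 ∧
    type1K G v1 ∧ type1K G v2 ∧ type1K G v3 ∧ type1K G v4 ∧
    (∀ X Y : TwinVertex G, X ≠ Y → ¬ (twinGraph G).Adj X Y →
      ¬ (typeK G X ∧ typeK G Y)) ∧
    (∀ X Y : TwinVertex G, (twinGraph G).Adj X Y → ¬ (typeK G X ∧ typeN G Y))

/-- Structure `G_7`: the twin graph is the kite (`K_4` minus an edge, vertices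
`a, b` of degree 3 in the kite and `c, d` the non-adjacent pair) with a pendant
vertex `l` attached to the degree-3 vertex `a`; `l` is of type (1), `a` and `b`
are of type (1K), one of `c, d` is of type (K) and the other of type (1). -/
def structG7 (G : SimpleGraph V) : Prop :=
  ∃ a b c d l : TwinVertex G,
    a ≠ b ∧ a ≠ c ∧ a ≠ d ∧ a ≠ l ∧ b ≠ c ∧ b ≠ d ∧ b ≠ l ∧ c ≠ d ∧ c ≠ l ∧ d ≠ l ∧
    (∀ X : TwinVertex G, X = a ∨ X = b ∨ X = c ∨ X = d ∨ X = l) ∧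
    (twinGraph G).Adj a b ∧ (twinGraph G).Adj a c ∧ (twinGraph G).Adj a d ∧
    (twinGraph G).Adj b c ∧ (twinGraph G).Adj b d ∧ (twinGraph G).Adj a l ∧
    ¬ (twinGraph G).Adj c d ∧ ¬ (twinGraph G).Adj b l ∧ ¬ (twinGraph G).Adj c l ∧
    ¬ (twinGraph G).Adj d l ∧
    typeOne G l ∧ type1K G a ∧ type1K G b ∧ typeK G c ∧ typeOne G d

/-- Structure `G_8`: the twin graph is the kite (`K_4` minus an edge, `a, b` of
degree 3 and `c, d` the non-adjacent degree-2 pair); one degree-2 vertex `c` is of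
type (K) and the other `d` of type (1); one degree-3 vertex `a` is of type (N)
and the other `b` of type (1K). -/
def structG8 (G : SimpleGraph V) : Prop :=
  ∃ a b c d : TwinVertex G,
    a ≠ b ∧ a ≠ c ∧ a ≠ d ∧ b ≠ c ∧ b ≠ d ∧ c ≠ d ∧
    (∀ X : TwinVertex G, X = a ∨ X = b ∨ X = c ∨ X = d) ∧
    (twinGraph G).Adj a b ∧ (twinGraph G).Adj a c ∧ (twinGraph G).Adj a d ∧
    (twinGraph G).Adj b c ∧ (twinGraph G).Adj b d ∧ ¬ (twinGraph G).Adj c d ∧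
    typeN G a ∧ type1K G b ∧ typeK G c ∧ typeOne G d

/-- Structure `G_9`: the twin graph is `C_4`, two adjacent vertices of type (K)
and the other two of type (1). -/
def structG9 (G : SimpleGraph V) : Prop :=
  ∃ v0 v1 v2 v3 : TwinVertex G,
    v0 ≠ v1 ∧ v0 ≠ v2 ∧ v0 ≠ v3 ∧ v1 ≠ v2 ∧ v1 ≠ v3 ∧ v2 ≠ v3 ∧
    (∀ X : TwinVertex G, X = v0 ∨ X = v1 ∨ X = v2 ∨ X = v3) ∧
    (twinGraph G).Adj v0 v1 ∧ (twinGraph G).Adj v1 v2 ∧ (twinGraph G).Adj v2 v3 ∧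
    (twinGraph G).Adj v3 v0 ∧ ¬ (twinGraph G).Adj v0 v2 ∧ ¬ (twinGraph G).Adj v1 v3 ∧
    typeK G v0 ∧ typeK G v1 ∧ typeOne G v2 ∧ typeOne G v3

/-- Structure `G_10`: the twin graph is the wheel `C_4 ∨ K_1` (hub `h`, rim
`v0 v1 v2 v3`); two adjacent rim (degree-3) vertices `v0, v1` are of type (K), the
hub is of type (1K), and the other vertices of type (1). -/
def structG10 (G : SimpleGraph V) : Prop :=
  ∃ h v0 v1 v2 v3 : TwinVertex G,
    h ≠ v0 ∧ h ≠ v1 ∧ h ≠ v2 ∧ h ≠ v3 ∧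
    v0 ≠ v1 ∧ v0 ≠ v2 ∧ v0 ≠ v3 ∧ v1 ≠ v2 ∧ v1 ≠ v3 ∧ v2 ≠ v3 ∧
    (∀ X : TwinVertex G, X = h ∨ X = v0 ∨ X = v1 ∨ X = v2 ∨ X = v3) ∧
    (twinGraph G).Adj h v0 ∧ (twinGraph G).Adj h v1 ∧ (twinGraph G).Adj h v2 ∧
    (twinGraph G).Adj h v3 ∧
    (twinGraph G).Adj v0 v1 ∧ (twinGraph G).Adj v1 v2 ∧ (twinGraph G).Adj v2 v3 ∧
    (twinGraph G).Adj v3 v0 ∧ ¬ (twinGraph G).Adj v0 v2 ∧ ¬ (twinGraph G).Adj v1 v3 ∧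
    typeK G v0 ∧ typeK G v1 ∧ type1K G h ∧ typeOne G v2 ∧ typeOne G v3

/-! ### Auxiliary infrastructure -/

section Aux

variable {V : Type*} {G : SimpleGraph V}

lemma twins_iff {u w : V} :
    Twins G u w ↔ u ≠ w ∧ ∀ t, t ≠ u → t ≠ w → (G.Adj u t ↔ G.Adj w t) := by
  unfold Twins
  refine and_congr_right fun hne => ?_
  constructor
  · intro h t htu htw
    constructor
    · intro ha
      have ht : t ∈ G.neighborSet u \ {w} := ⟨ha, htw⟩
      rw [h] at ht
      exact ht.1
    · intro ha
      have ht : t ∈ G.neighborSet w \ {u} := ⟨ha, htu⟩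
      rw [← h] at ht
      exact ht.1
  · intro h
    ext t
    simp only [Set.mem_diff, SimpleGraph.mem_neighborSet, Set.mem_singleton_iff]
    constructor
    · rintro ⟨ha, htw⟩
      have htu : t ≠ u := fun he => G.irrefl (he ▸ ha)
      exact ⟨(h t htu htw).mp ha, htu⟩
    · rintro ⟨ha, htu⟩
      have htw : t ≠ w := fun he => G.irrefl (he ▸ ha)
      exact ⟨(h t htu htw).mpr ha, htw⟩

lemma twinRel_refl (u : V) : twinRel G u u := Or.inl rfl

lemma twinRel_adj {u w t : V} (h : twinRel G u w) (htu : t ≠ u) (htw : t ≠ w) :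
    G.Adj u t ↔ G.Adj w t := by
  rcases h with rfl | h
  · exact Iff.rfl
  · exact (twins_iff.mp h).2 t htu htw

lemma twinRel_symm {u w : V} (h : twinRel G u w) : twinRel G w u := by
  rcases h with rfl | h
  · exact Or.inl rfl
  · obtain ⟨hne, hs⟩ := h
    exact Or.inr ⟨hne.symm, hs.symm⟩

lemma twinRel_trans {u w z : V} (h1 : twinRel G u w) (h2 : twinRel G w z) :
    twinRel G u z := by
  rcases h1 with rfl | h1
  · exact h2
  rcases h2 with rfl | h2
  · exact Or.inr h1
  by_cases huz : u = z
  · exact Or.inl huz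
  obtain ⟨huw, H1⟩ := twins_iff.mp h1
  obtain ⟨hwz, H2⟩ := twins_iff.mp h2
  refine Or.inr (twins_iff.mpr ⟨huz, fun t htu htz => ?_⟩)
  by_cases htw : t = w
  · subst htw
    have e1 := H1 z (Ne.symm huz) (Ne.symm hwz)
    have e2 := H2 u huw huz
    rw [G.adj_comm u t, G.adj_comm z t]
    exact e2.trans ((G.adj_comm z u).trans e1)
  · exact (H1 t htu htw).trans (H2 t htw htz)

lemma mem_twinClass_iff {u w : V} : w ∈ twinClass G u ↔ twinRel G u w := Iff.rfl

lemma twinClass_eq {u w : V} (h : twinRel G u w) : twinClass G u = twinClass G w :=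
  Set.ext fun t => ⟨fun ht => twinRel_trans (twinRel_symm h) ht, fun ht => twinRel_trans h ht⟩

lemma cls_eq {u w : V} (h : twinRel G u w) : cls G u = cls G w :=
  Subtype.ext (twinClass_eq h)

lemma cls_eq_iff {u w : V} : cls G u = cls G w ↔ twinRel G u w := by
  constructor
  · intro h
    have : w ∈ twinClass G u := by
      have h' : twinClass G u = twinClass G w := congrArg Subtype.val h
      rw [h']
      exact twinRel_refl w
    exact this
  · exact cls_eq

lemma cls_ne {u w : V} (h : ¬ twinRel G u w) : cls G u ≠ cls G w :=
  fun he => h (cls_eq_iff.mp he)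

lemma cls_surj (T : TwinVertex G) : ∃ u, T = cls G u := by
  obtain ⟨S, u, rfl⟩ := T
  exact ⟨u, rfl⟩

lemma mem_cls_iff {u w : V} : w ∈ (cls G u).1 ↔ twinRel G u w := Iff.rfl

lemma twinGraph_adj_cls {u w : V} :
    (twinGraph G).Adj (cls G u) (cls G w) ↔ ¬ twinRel G u w ∧ G.Adj u w := by
  constructor
  · rintro ⟨hne, a, ha, b, hb, hab⟩
    have hnt : ¬ twinRel G u w := fun h => hne (cls_eq h)
    have hua : twinRel G u a := ha
    have hwb : twinRel G w b := hb
    have hbu : b ≠ u := fun he => hnt (twinRel_symm (he ▸ hwb))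
    have hba : b ≠ a := fun he => G.irrefl (he ▸ hab)
    have h1 : G.Adj u b := (twinRel_adj hua hbu hba).mpr hab
    have huw : u ≠ w := fun he => hnt (he ▸ twinRel_refl u)
    have h2 : G.Adj w u ↔ G.Adj b u := twinRel_adj hwb huw (Ne.symm hbu)
    exact ⟨hnt, (h2.mpr h1.symm).symm⟩
  · rintro ⟨hnt, hadj⟩
    exact ⟨cls_ne hnt, u, twinRel_refl u, w, twinRel_refl w, hadj⟩

lemma not_twinGraph_adj_cls {u w : V} (h : ¬ G.Adj u w) :
    ¬ (twinGraph G).Adj (cls G u) (cls G w) :=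
  fun ha => h (twinGraph_adj_cls.mp ha).2

/-- distances in a connected graph of diameter at most two -/
lemma dist_two (hc : G.Connected) (hle : ∀ a b : V, G.dist a b ≤ 2) {u w : V}
    (hne : u ≠ w) (h : ¬ G.Adj u w) : G.dist u w = 2 := by
  have h0 : 0 < G.dist u w := hc.pos_dist_of_ne hne
  have h1 : G.dist u w ≠ 1 := fun he => h (SimpleGraph.dist_eq_one_iff_adj.mp he)
  have h2 := hle u w
  omega

lemma common_nbr (hc : G.Connected) (hle : ∀ a b : V, G.dist a b ≤ 2) {u w : V}
    (hne : u ≠ w) (hnadj : ¬ G.Adj u w) : ∃ t, G.Adj u t ∧ G.Adj t w := by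
  have hd : G.dist u w = 2 := dist_two hc hle hne hnadj
  obtain ⟨p, hp⟩ := hc.exists_walk_length_eq_dist u w
  rw [hd] at hp
  cases p with
  | nil => simp at hp
  | @cons _ t1 _ h q =>
    cases q with
    | nil => simp at hp
    | @cons _ t2 _ h' r =>
      have hr : r.length = 0 := by
        simp only [SimpleGraph.Walk.length_cons] at hp
        omega
      have ht2 : t2 = w := SimpleGraph.Walk.eq_of_length_eq_zero hr
      exact ⟨t1, h, ht2 ▸ h'⟩

end Aux
section Quad

variable {V : Type*} [Fintype V] {G : SimpleGraph V}

lemma dist_ne_of_wit (hc : G.Connected) (hle : ∀ a b : V, G.dist a b ≤ 2)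
    {p q t : V} (htp : t ≠ p) (htq : t ≠ q) (hiff : ¬ (G.Adj t p ↔ G.Adj t q)) :
    G.dist p t ≠ G.dist q t := by
  by_cases h1 : G.Adj t p <;> by_cases h2 : G.Adj t q
  · exact absurd (iff_of_true h1 h2) hiff
  · have d1 : G.dist p t = 1 := SimpleGraph.dist_eq_one_iff_adj.mpr ((G.adj_comm t p).mp h1)
    have d2 : G.dist q t = 2 := dist_two hc hle (Ne.symm htq)
      (fun h => h2 ((G.adj_comm q t).mp h))
    omega
  · have d1 : G.dist p t = 2 := dist_two hc hle (Ne.symm htp)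
      (fun h => h1 ((G.adj_comm p t).mp h))
    have d2 : G.dist q t = 1 := SimpleGraph.dist_eq_one_iff_adj.mpr ((G.adj_comm t q).mp h2)
    omega
  · exact absurd (iff_of_false h1 h2) hiff

set_option maxHeartbeats 1000000 in
lemma quad6 (hc : G.Connected) (hle : ∀ a b : V, G.dist a b ≤ 2)
    (hbeta : metricDim G = Fintype.card V - 3)
    {a b c d : V} (hab : a ≠ b) (hac : a ≠ c) (had : a ≠ d) (hbc : b ≠ c)
    (hbd : b ≠ d) (hcd : c ≠ d) :
    (∀ t, t ≠ a → t ≠ b → t ≠ c → t ≠ d → (G.Adj t a ↔ G.Adj t b)) ∨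
    (∀ t, t ≠ a → t ≠ b → t ≠ c → t ≠ d → (G.Adj t a ↔ G.Adj t c)) ∨
    (∀ t, t ≠ a → t ≠ b → t ≠ c → t ≠ d → (G.Adj t a ↔ G.Adj t d)) ∨
    (∀ t, t ≠ a → t ≠ b → t ≠ c → t ≠ d → (G.Adj t b ↔ G.Adj t c)) ∨
    (∀ t, t ≠ a → t ≠ b → t ≠ c → t ≠ d → (G.Adj t b ↔ G.Adj t d)) ∨
    (∀ t, t ≠ a → t ≠ b → t ≠ c → t ≠ d → (G.Adj t c ↔ G.Adj t d)) := by
  by_contra hcon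
  push_neg at hcon
  obtain ⟨h1, h2, h3, h4, h5, h6⟩ := hcon
  obtain ⟨t1, ht1a, ht1b, ht1c, ht1d, hw1⟩ := h1
  obtain ⟨t2, ht2a, ht2b, ht2c, ht2d, hw2⟩ := h2
  obtain ⟨t3, ht3a, ht3b, ht3c, ht3d, hw3⟩ := h3
  obtain ⟨t4, ht4a, ht4b, ht4c, ht4d, hw4⟩ := h4
  obtain ⟨t5, ht5a, ht5b, ht5c, ht5d, hw5⟩ := h5
  obtain ⟨t6, ht6a, ht6b, ht6c, ht6d, hw6⟩ := h6
  have hw1 : ¬ (G.Adj t1 a ↔ G.Adj t1 b) := by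
    rcases hw1 with ⟨u1, u2⟩ | ⟨u1, u2⟩
    exacts [fun h => u2 (h.mp u1), fun h => u1 (h.mpr u2)]
  have hw2 : ¬ (G.Adj t2 a ↔ G.Adj t2 c) := by
    rcases hw2 with ⟨u1, u2⟩ | ⟨u1, u2⟩
    exacts [fun h => u2 (h.mp u1), fun h => u1 (h.mpr u2)]
  have hw3 : ¬ (G.Adj t3 a ↔ G.Adj t3 d) := by
    rcases hw3 with ⟨u1, u2⟩ | ⟨u1, u2⟩
    exacts [fun h => u2 (h.mp u1), fun h => u1 (h.mpr u2)]
  have hw4 : ¬ (G.Adj t4 b ↔ G.Adj t4 c) := by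
    rcases hw4 with ⟨u1, u2⟩ | ⟨u1, u2⟩
    exacts [fun h => u2 (h.mp u1), fun h => u1 (h.mpr u2)]
  have hw5 : ¬ (G.Adj t5 b ↔ G.Adj t5 d) := by
    rcases hw5 with ⟨u1, u2⟩ | ⟨u1, u2⟩
    exacts [fun h => u2 (h.mp u1), fun h => u1 (h.mpr u2)]
  have hw6 : ¬ (G.Adj t6 c ↔ G.Adj t6 d) := by
    rcases hw6 with ⟨u1, u2⟩ | ⟨u1, u2⟩
    exacts [fun h => u2 (h.mp u1), fun h => u1 (h.mpr u2)]
  set S : Set V := {a, b, c, d} with hS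
  have hmemS : ∀ u : V, u ∈ S ↔ (u = a ∨ u = b ∨ u = c ∨ u = d) := by
    intro u; simp [hS]
  have hres : Resolves G Sᶜ := by
    intro u w huw
    by_cases hu : u ∈ S
    · by_cases hw : w ∈ S
      · have hu' := (hmemS u).mp hu
        have hw' := (hmemS w).mp hw
        have key : ∀ (p q t : V), t ≠ a → t ≠ b → t ≠ c → t ≠ d →
            ¬ (G.Adj t p ↔ G.Adj t q) → p ∈ S → q ∈ S →
            ∃ x ∈ Sᶜ, G.dist p x ≠ G.dist q x := by
          intro p q t hta htb htc htd hiff hp hq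
          have htS : t ∈ Sᶜ := by
            intro hts
            rcases (hmemS t).mp hts with rfl | rfl | rfl | rfl
            exacts [hta rfl, htb rfl, htc rfl, htd rfl]
          have htp : t ≠ p := by
            rintro rfl
            rcases (hmemS t).mp hp with rfl | rfl | rfl | rfl
            exacts [hta rfl, htb rfl, htc rfl, htd rfl]
          have htq : t ≠ q := by
            rintro rfl
            rcases (hmemS t).mp hq with rfl | rfl | rfl | rfl
            exacts [hta rfl, htb rfl, htc rfl, htd rfl]
          exact ⟨t, htS, dist_ne_of_wit hc hle htp htq hiff⟩
        rcases hu' with rfl | rfl | rfl | rfl <;> rcases hw' with rfl | rfl | rfl | rfl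
        · exact absurd rfl huw
        · exact key u w t1 ht1a ht1b ht1c ht1d hw1 hu hw
        · exact key u w t2 ht2a ht2b ht2c ht2d hw2 hu hw
        · exact key u w t3 ht3a ht3b ht3c ht3d hw3 hu hw
        · obtain ⟨x, hx, hd⟩ := key w u t1 ht1a ht1b ht1c ht1d hw1 hw hu
          exact ⟨x, hx, hd.symm⟩
        · exact absurd rfl huw
        · exact key u w t4 ht4a ht4b ht4c ht4d hw4 hu hw
        · exact key u w t5 ht5a ht5b ht5c ht5d hw5 hu hw
        · obtain ⟨x, hx, hd⟩ := key w u t2 ht2a ht2b ht2c ht2d hw2 hw hu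
          exact ⟨x, hx, hd.symm⟩
        · obtain ⟨x, hx, hd⟩ := key w u t4 ht4a ht4b ht4c ht4d hw4 hw hu
          exact ⟨x, hx, hd.symm⟩
        · exact absurd rfl huw
        · exact key u w t6 ht6a ht6b ht6c ht6d hw6 hu hw
        · obtain ⟨x, hx, hd⟩ := key w u t3 ht3a ht3b ht3c ht3d hw3 hw hu
          exact ⟨x, hx, hd.symm⟩
        · obtain ⟨x, hx, hd⟩ := key w u t5 ht5a ht5b ht5c ht5d hw5 hw hu
          exact ⟨x, hx, hd.symm⟩
        · obtain ⟨x, hx, hd⟩ := key w u t6 ht6a ht6b ht6c ht6d hw6 hw hu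
          exact ⟨x, hx, hd.symm⟩
        · exact absurd rfl huw
      · refine ⟨w, hw, ?_⟩
        have h0 : G.dist w w = 0 := SimpleGraph.dist_self
        have hp : 0 < G.dist u w := hc.pos_dist_of_ne huw
        omega
    · refine ⟨u, hu, ?_⟩
      have h0 : G.dist u u = 0 := SimpleGraph.dist_self
      have hp : 0 < G.dist w u := hc.pos_dist_of_ne (Ne.symm huw)
      omega
  have hcard4 : S.ncard = 4 := by
    rw [hS]
    rw [Set.ncard_insert_of_notMem (by simp [hab, hac, had]),
      Set.ncard_insert_of_notMem (by simp [hbc, hbd]),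
      Set.ncard_insert_of_notMem (by simp [hcd]), Set.ncard_singleton]
  have htot := Set.ncard_add_ncard_compl S
  rw [Nat.card_eq_fintype_card, hcard4] at htot
  have hle4 : 4 ≤ Fintype.card V := by
    have h := Set.ncard_le_ncard (Set.subset_univ S) Set.finite_univ
    rw [Set.ncard_univ, Nat.card_eq_fintype_card] at h
    omega
  have hinf : metricDim G ≤ Fintype.card V - 4 :=
    Nat.sInf_le ⟨Sᶜ, hres, by omega⟩
  rw [hbeta] at hinf
  omega

end Quad
section TypeHelpers

variable {V : Type*} {G : SimpleGraph V}

lemma typeOne_of {a : V} (h : ∀ u, twinRel G a u → u = a) : typeOne G (cls G a) := by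
  refine ⟨a, ?_⟩
  ext u
  simp only [Set.mem_singleton_iff]
  exact ⟨fun hu => h u hu, fun hu => hu ▸ twinRel_refl a⟩

lemma typeK_of {a w : V} (hw : twinRel G a w) (hne : w ≠ a)
    (h : ∀ u ∈ (cls G a).1, ∀ u' ∈ (cls G a).1, u ≠ u' → G.Adj u u') :
    typeK G (cls G a) :=
  ⟨⟨w, hw, a, twinRel_refl a, hne⟩, h⟩

lemma type1K_of_adj {a : V}
    (h : ∀ u ∈ (cls G a).1, ∀ u' ∈ (cls G a).1, u ≠ u' → G.Adj u u') :
    type1K G (cls G a) := by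
  classical
  by_cases hnt : (cls G a).1.Nontrivial
  · exact Or.inr ⟨hnt, h⟩
  · refine Or.inl ⟨a, ?_⟩
    ext u
    simp only [Set.mem_singleton_iff]
    constructor
    · intro hu
      by_contra hne
      exact hnt ⟨u, hu, a, twinRel_refl a, hne⟩
    · intro hu
      exact hu ▸ twinRel_refl a

lemma typeK_elt {a : V} (h : typeK G (cls G a)) : ∃ u, twinRel G a u ∧ u ≠ a := by
  obtain ⟨⟨u1, hu1, u2, hu2, hne⟩, -⟩ := h
  by_cases h1 : u1 = a
  · exact ⟨u2, hu2, fun he => hne (h1.trans he.symm)⟩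
  · exact ⟨u1, hu1, h1⟩

lemma ntw_of_wit {u w t : V} (h1 : t ≠ u) (h2 : t ≠ w) (ha : G.Adj u t)
    (hn : ¬ G.Adj w t) : ¬ twinRel G u w :=
  fun h => hn ((twinRel_adj h h1 h2).mp ha)

end TypeHelpers
section Core

variable {V : Type*} [Fintype V] {G : SimpleGraph V}

set_option maxHeartbeats 2000000 in
lemma core (hc : G.Connected) (hle : ∀ a b : V, G.dist a b ≤ 2)
    (hbeta : metricDim G = Fintype.card V - 3)
    {v x y : V}
    (hA : (∀ a, G.Adj v a → ∀ b, G.Adj v b → a ≠ b → G.Adj a b) ∨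
          (∀ a, G.Adj v a → ∀ b, G.Adj v b → ¬ G.Adj a b))
    (hB : (∀ a, ¬ G.Adj v a → a ≠ v → ∀ b, ¬ G.Adj v b → b ≠ v → a ≠ b → G.Adj a b) ∨
          (∀ a, ¬ G.Adj v a → a ≠ v → ∀ b, ¬ G.Adj v b → b ≠ v → ¬ G.Adj a b))
    (hxv : G.Adj v x) (hyv : G.Adj v y)
    (hnxy : ¬ twinRel G x y)
    (hmax : ∀ a, G.Adj v a → ∀ b, ¬ G.Adj v b → ¬ twinRel G v b → G.Adj a b →
      twinRel G a x ∨ twinRel G a y)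
    (hyB : ∃ b, ¬ G.Adj v b ∧ ¬ twinRel G v b ∧ G.Adj y b)
    (hp : ∃ p, ¬ G.Adj v p ∧ ¬ twinRel G v p ∧ G.Adj x p ∧ ¬ G.Adj y p) :
    structG4 G ∨ structG5 G ∨ structG6 G ∨ structG7 G := by
  classical
  obtain ⟨p, hvp, hnvp, hxp, hnyp⟩ := hp
  have hpv : p ≠ v := fun he => hnvp (by rw [he]; exact twinRel_refl _)
  have hvx : v ≠ x := G.ne_of_adj hxv
  have hvy : v ≠ y := G.ne_of_adj hyv
  have hxy : x ≠ y := fun he => hnxy (by rw [he]; exact twinRel_refl _)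
  have hpx : p ≠ x := fun he => hvp (by rw [he]; exact hxv)
  have hpy : p ≠ y := fun he => hvp (by rw [he]; exact hyv)
  have hnvx : ¬ twinRel G v x := fun h => hvp ((twinRel_adj h hpv hpx).mpr hxp)
  obtain ⟨by0, hvby, hnvby, hyby⟩ := hyB
  have hbyv : by0 ≠ v := fun he => hnvby (by rw [he]; exact twinRel_refl _)
  have hbyy : by0 ≠ y := fun he => hvby (by rw [he]; exact hyv)
  have hnvy : ¬ twinRel G v y := fun h => hvby ((twinRel_adj h hbyv hbyy).mpr hyby)
  have hABntw : ∀ {a b : V}, G.Adj v a → ¬ G.Adj v b → b ≠ v → ¬ twinRel G a b := by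
    intro a b ha hb hbv h
    have hva : v ≠ a := G.ne_of_adj ha
    exact hb (((twinRel_adj h hva (Ne.symm hbv)).mp ha.symm).symm)
  have hABne : ∀ {a b : V}, G.Adj v a → ¬ G.Adj v b → a ≠ b := by
    intro a b ha hb he
    exact hb (he ▸ ha)
  have sb : ∀ b, ¬ G.Adj v b → ¬ twinRel G v b → (G.Adj x b ∨ G.Adj y b) := by
    intro b hb hnb
    have hbv : b ≠ v := fun he => hnb (by rw [he]; exact twinRel_refl _)
    obtain ⟨t, hvt, htb⟩ := common_nbr hc hle (Ne.symm hbv) hb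
    have hbt : b ≠ t := (G.ne_of_adj htb).symm
    rcases hmax t hvt b hb hnb htb with h | h
    · exact Or.inl ((twinRel_adj h hbt (Ne.symm (hABne hxv hb))).mp htb)
    · exact Or.inr ((twinRel_adj h hbt (Ne.symm (hABne hyv hb))).mp htb)
  by_cases hr : ∃ r, ¬ G.Adj v r ∧ ¬ twinRel G v r ∧ G.Adj x r ∧ G.Adj y r
  · obtain ⟨r, hvr, hnvr, hxr, hyr⟩ := hr
    have hrv : r ≠ v := fun he => hnvr (by rw [he]; exact twinRel_refl _)
    have hrx : r ≠ x := Ne.symm (hABne hxv hvr)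
    have hry : r ≠ y := Ne.symm (hABne hyv hvr)
    have hpr : p ≠ r := fun he => hnyp (by rw [he]; exact hyr)
    by_cases hq : ∃ q, ¬ G.Adj v q ∧ ¬ twinRel G v q ∧ G.Adj y q ∧ ¬ G.Adj x q
    · -- CONFIG P,Q,R : contradiction
      exfalso
      obtain ⟨q, hvq, hnvq, hyq, hnxq⟩ := hq
      have hqv : q ≠ v := fun he => hnvq (by rw [he]; exact twinRel_refl _)
      have hqx : q ≠ x := Ne.symm (hABne hxv hvq)
      have hqy : q ≠ y := Ne.symm (hABne hyv hvq)
      have hpq : p ≠ q := fun he => hnxq (by rw [← he]; exact hxp)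
      have hqr : q ≠ r := fun he => hnxq (by rw [he]; exact hxr)
      rcases hB with hBc | hBe
      · rcases quad6 hc hle hbeta hvx hvy (Ne.symm hrv) hxy (Ne.symm hrx) (Ne.symm hry)
          with H | H | H | H | H | H
        · exact hvp (((H p hpv hpx hpy hpr).mpr hxp.symm).symm)
        · exact hvq (((H q hqv hqx hqy hqr).mpr hyq.symm).symm)
        · have hpr' : G.Adj p r := hBc p hvp hpv r hvr hrv hpr
          exact hvp (((H p hpv hpx hpy hpr).mpr hpr').symm)
        · exact hnyp ((H p hpv hpx hpy hpr).mp hxp.symm).symm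
        · have hqr' : G.Adj q r := hBc q hvq hqv r hvr hrv hqr
          exact hnxq ((H q hqv hqx hqy hqr).mpr hqr').symm
        · have hpr' : G.Adj p r := hBc p hvp hpv r hvr hrv hpr
          exact hnyp ((H p hpv hpx hpy hpr).mpr hpr').symm
      · have hnpq : ¬ G.Adj p q := hBe p hvp hpv q hvq hqv
        obtain ⟨t, htp, htq⟩ := common_nbr hc hle hpq hnpq
        by_cases hvt : G.Adj v t
        · rcases hmax t hvt p hvp hnvp htp.symm with h | h
          · exact hnxq ((twinRel_adj h (G.ne_of_adj htq).symm hqx).mp htq)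
          · exact hnyp ((twinRel_adj h (G.ne_of_adj htp) hpy).mp htp.symm)
        · by_cases hvt2 : t = v
          · rw [hvt2] at htq
            exact hvq htq
          · exact hBe t hvt hvt2 q hvq hqv htq
    · -- CONFIG P,R
      push_neg at hq
      have hallx : ∀ b, ¬ G.Adj v b → ¬ twinRel G v b → G.Adj x b := by
        intro b hb hnb
        rcases sb b hb hnb with h | h
        · exact h
        · exact hq b hb hnb h
      rcases hB with hBc | hBe
      · -- B complete
        have hBB' : ∀ b, ¬ G.Adj v b → b ≠ v → ¬ twinRel G v b := by
          intro b hb hbv h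
          by_cases hbp : b = p
          · subst hbp
            have hbr : G.Adj b r := hBc b hb hbv r hvr hrv hpr
            exact hvr ((twinRel_adj h hrv (Ne.symm hpr)).mpr hbr)
          · have hbp' : G.Adj b p := hBc b hb hbv p hvp hpv hbp
            exact hvp ((twinRel_adj h hpv (Ne.symm hbp)).mpr hbp')
        rcases hA with hAc | hAe
        · -- A complete : G6
          have hpr' : G.Adj p r := hBc p hvp hpv r hvr hrv hpr
          have hAcls : ∀ u, twinRel G v u → u ≠ v → G.Adj v u := by
            intro u h hne
            by_contra h2
            exact hBB' u h2 hne h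
          have hAclsy : ∀ u, twinRel G y u → u ≠ y → G.Adj v u := by
            intro u h hne
            by_cases h1 : u = v
            · exact absurd (twinRel_symm (h1 ▸ h)) hnvy
            · by_contra h2
              exact (hABntw hyv h2 h1) h
          have hmemx : ∀ u, twinRel G x u → G.Adj v u := by
            intro u h
            by_cases h1 : u = v
            · exact absurd (twinRel_symm (h1 ▸ h)) hnvx
            · by_contra h2
              exact (hABntw hxv h2 h1) h
          have hZfact : (∀ u, twinRel G v u → u = v) ∨
              ((∀ b, ¬ G.Adj v b → ¬ twinRel G v b → ¬ G.Adj y b → b = p) ∧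
               (∀ b, ¬ G.Adj v b → ¬ twinRel G v b → G.Adj y b → b = r)) := by
            rcases quad6 hc hle hbeta hvx (Ne.symm hpv) (Ne.symm hrv) (Ne.symm hpx)
              (Ne.symm hrx) hpr with H | H | H | H | H | H
            · right
              constructor
              · intro b hb hnb hnyb
                by_contra hne
                have hbr : b ≠ r := fun he => hnyb (by rw [he]; exact hyr)
                have hbv : b ≠ v := fun he => hnb (by rw [he]; exact twinRel_refl _)
                exact hb (((H b hbv (Ne.symm (hABne hxv hb)) hne hbr).mpr
                  (hallx b hb hnb).symm).symm)
              · intro b hb hnb hyb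
                by_contra hne
                have hbp : b ≠ p := fun he => hnyp (by rw [← he]; exact hyb)
                have hbv : b ≠ v := fun he => hnb (by rw [he]; exact twinRel_refl _)
                exact hb (((H b hbv (Ne.symm (hABne hxv hb)) hbp hne).mpr
                  (hallx b hb hnb).symm).symm)
            · exact absurd ((H y (Ne.symm hvy) (Ne.symm hxy) (Ne.symm hpy)
                (Ne.symm hry)).mp hyv.symm) hnyp
            · left
              intro u h
              by_contra hne
              have hvu : G.Adj v u := hAcls u h hne
              have hux : u ≠ x := fun he => hnvx (he ▸ h)
              have hur : G.Adj u r := (H u (G.ne_of_adj hvu).symm hux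
                (hABne hvu hvp) (hABne hvu hvr)).mp hvu.symm
              exact hvr ((twinRel_adj h hrv (Ne.symm (hABne hvu hvr))).mpr hur)
            · exact absurd ((H y (Ne.symm hvy) (Ne.symm hxy) (Ne.symm hpy)
                (Ne.symm hry)).mp (hAc y hyv x hxv (Ne.symm hxy))) hnyp
            · left
              intro u h
              by_contra hne
              have hvu : G.Adj v u := hAcls u h hne
              have hux : u ≠ x := fun he => hnvx (he ▸ h)
              have hur : G.Adj u r := (H u (G.ne_of_adj hvu).symm hux
                (hABne hvu hvp) (hABne hvu hvr)).mp (hAc u hvu x hxv hux)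
              exact hvr ((twinRel_adj h hrv (Ne.symm (hABne hvu hvr))).mpr hur)
            · exact absurd ((H y (Ne.symm hvy) (Ne.symm hxy) (Ne.symm hpy)
                (Ne.symm hry)).mpr hyr) hnyp
          have hfact2 : (∀ b, ¬ G.Adj v b → ¬ twinRel G v b → ¬ G.Adj y b → b = p) ∨
              ((∀ u, twinRel G y u → u = y) ∧ (∀ u, twinRel G v u → u = v)) := by
            rcases quad6 hc hle hbeta hvx hvy (Ne.symm hpv) hxy (Ne.symm hpx) (Ne.symm hpy)
              with H | H | H | H | H | H
            · exact absurd (((H r hrv hrx hry (Ne.symm hpr)).mpr hxr.symm).symm) hvr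
            · exact absurd (((H r hrv hrx hry (Ne.symm hpr)).mpr hyr.symm).symm) hvr
            · exact absurd (((H r hrv hrx hry (Ne.symm hpr)).mpr hpr'.symm).symm) hvr
            · left
              intro b hb hnb hnyb
              by_contra hne
              have hbv : b ≠ v := fun he => hnb (by rw [he]; exact twinRel_refl _)
              exact hnyb (((H b hbv (Ne.symm (hABne hxv hb)) (Ne.symm (hABne hyv hb))
                hne).mp (hallx b hb hnb).symm).symm)
            · right
              constructor
              · intro u h
                by_contra hne
                have hvu : G.Adj v u := hAclsy u h hne
                have hux : u ≠ x := fun he => hnxy (twinRel_symm (he ▸ h))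
                have hup : G.Adj u p := (H u (G.ne_of_adj hvu).symm hux hne
                  (hABne hvu hvp)).mp (hAc u hvu x hxv hux)
                exact hnyp ((twinRel_adj h hpy (Ne.symm (hABne hvu hvp))).mpr hup)
              · intro u h
                by_contra hne
                have hvu : G.Adj v u := hAcls u h hne
                have hux : u ≠ x := fun he => hnvx (he ▸ h)
                have huy : u ≠ y := fun he => hnvy (he ▸ h)
                have hup : G.Adj u p := (H u (G.ne_of_adj hvu).symm hux huy
                  (hABne hvu hvp)).mp (hAc u hvu x hxv hux)
                exact hvp ((twinRel_adj h hpv (Ne.symm (hABne hvu hvp))).mpr hup)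
            · right
              constructor
              · intro u h
                by_contra hne
                have hvu : G.Adj v u := hAclsy u h hne
                have hux : u ≠ x := fun he => hnxy (twinRel_symm (he ▸ h))
                have hup : G.Adj u p := (H u (G.ne_of_adj hvu).symm hux hne
                  (hABne hvu hvp)).mp (hAc u hvu y hyv hne)
                exact hnyp ((twinRel_adj h hpy (Ne.symm (hABne hvu hvp))).mpr hup)
              · intro u h
                by_contra hne
                have hvu : G.Adj v u := hAcls u h hne
                have hux : u ≠ x := fun he => hnvx (he ▸ h)
                have huy : u ≠ y := fun he => hnvy (he ▸ h)
                have hup : G.Adj u p := (H u (G.ne_of_adj hvu).symm hux huy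
                  (hABne hvu hvp)).mp (hAc u hvu y hyv huy)
                exact hvp ((twinRel_adj h hpv (Ne.symm (hABne hvu hvp))).mpr hup)
          have htwinR : ∀ b, ¬ G.Adj v b → ¬ twinRel G v b → G.Adj y b → twinRel G b r := by
            intro b hb hnb hyb
            by_cases hbr : b = r
            · exact hbr ▸ twinRel_refl _
            have hbv : b ≠ v := fun he => hnb (by rw [he]; exact twinRel_refl _)
            refine Or.inr (twins_iff.mpr ⟨hbr, fun t htb htr => ?_⟩)
            by_cases htv : t = v
            · subst htv
              exact iff_of_false (fun h' => hb h'.symm) (fun h' => hvr h'.symm)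
            by_cases hvt : G.Adj v t
            · constructor
              · intro htb'
                rcases hmax t hvt b hb hnb htb'.symm with h | h
                · exact ((twinRel_adj h (Ne.symm htr) hrx).mpr hxr).symm
                · exact ((twinRel_adj h (Ne.symm htr) hry).mpr hyr).symm
              · intro htr'
                by_contra hbt'
                rcases hmax t hvt r hvr hnvr htr'.symm with h | h
                · exact hbt' ((twinRel_adj h (Ne.symm htb)
                    (Ne.symm (hABne hxv hb))).mpr (hallx b hb hnb)).symm
                · exact hbt' ((twinRel_adj h (Ne.symm htb)
                    (Ne.symm (hABne hyv hb))).mpr hyb).symm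
            · exact iff_of_true (hBc b hb hbv t hvt htv (Ne.symm htb))
                (hBc r hvr hrv t hvt htv (Ne.symm htr))
          have htwinP : ∀ b, ¬ G.Adj v b → ¬ twinRel G v b → ¬ G.Adj y b → twinRel G b p := by
            intro b hb hnb hnyb
            by_cases hbp : b = p
            · exact hbp ▸ twinRel_refl _
            have hbv : b ≠ v := fun he => hnb (by rw [he]; exact twinRel_refl _)
            refine Or.inr (twins_iff.mpr ⟨hbp, fun t htb htp => ?_⟩)
            by_cases htv : t = v
            · subst htv
              exact iff_of_false (fun h' => hb h'.symm) (fun h' => hvp h'.symm)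
            by_cases hvt : G.Adj v t
            · constructor
              · intro htb'
                rcases hmax t hvt b hb hnb htb'.symm with h | h
                · exact ((twinRel_adj h (Ne.symm htp) hpx).mpr hxp).symm
                · exact absurd ((twinRel_adj h (Ne.symm htb)
                    (Ne.symm (hABne hyv hb))).mp htb'.symm) hnyb
              · intro htp'
                by_contra hbt'
                rcases hmax t hvt p hvp hnvp htp'.symm with h | h
                · exact hbt' ((twinRel_adj h (Ne.symm htb)
                    (Ne.symm (hABne hxv hb))).mpr (hallx b hb hnb)).symm
                · exact absurd ((twinRel_adj h (Ne.symm htp) hpy).mp htp'.symm) hnyp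
            · exact iff_of_true (hBc b hb hbv t hvt htv (Ne.symm htb))
                (hBc p hvp hpv t hvt htv (Ne.symm htp))
          have hcov : ∀ X : TwinVertex G, X = cls G x ∨ X = cls G p ∨ X = cls G r ∨
              X = cls G y ∨ X = cls G v := by
            intro X
            obtain ⟨u, rfl⟩ := cls_surj X
            by_cases huv : G.Adj v u
            · by_cases hub : ∃ b, ¬ G.Adj v b ∧ ¬ twinRel G v b ∧ G.Adj u b
              · obtain ⟨b, h1, h2, h3⟩ := hub
                rcases hmax u huv b h1 h2 h3 with h | h
                · exact Or.inl (cls_eq h)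
                · exact Or.inr (Or.inr (Or.inr (Or.inl (cls_eq h))))
              · refine Or.inr (Or.inr (Or.inr (Or.inr (cls_eq (twinRel_symm ?_)))))
                refine Or.inr (twins_iff.mpr ⟨Ne.symm (G.ne_of_adj huv).symm,
                  fun t htv htu => ?_⟩)
                constructor
                · intro h
                  exact hAc u huv t h (Ne.symm htu)
                · intro h
                  by_contra hnt
                  exact hub ⟨t, hnt, hBB' t hnt htv, h⟩
            · by_cases huv2 : u = v
              · subst huv2
                exact Or.inr (Or.inr (Or.inr (Or.inr rfl)))
              · have hnu := hBB' u huv huv2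
                by_cases hyu : G.Adj y u
                · exact Or.inr (Or.inr (Or.inl (cls_eq (htwinR u huv hnu hyu))))
                · exact Or.inr (Or.inl (cls_eq (htwinP u huv hnu hyu)))
          have hntpr : ¬ twinRel G p r := fun h =>
            (ntw_of_wit (Ne.symm hry) (Ne.symm hpy) hyr.symm (fun h' => hnyp h'.symm))
              (twinRel_symm h)
          have axp : (twinGraph G).Adj (cls G x) (cls G p) :=
            twinGraph_adj_cls.mpr ⟨hABntw hxv hvp hpv, hxp⟩
          have apr : (twinGraph G).Adj (cls G p) (cls G r) :=
            twinGraph_adj_cls.mpr ⟨hntpr, hpr'⟩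
          have ary : (twinGraph G).Adj (cls G r) (cls G y) :=
            twinGraph_adj_cls.mpr ⟨fun h => (hABntw hyv hvr hrv) (twinRel_symm h), hyr.symm⟩
          have ayv : (twinGraph G).Adj (cls G y) (cls G v) :=
            twinGraph_adj_cls.mpr ⟨fun h => hnvy (twinRel_symm h), hyv.symm⟩
          have avx : (twinGraph G).Adj (cls G v) (cls G x) :=
            twinGraph_adj_cls.mpr ⟨hnvx, hxv⟩
          have axr : (twinGraph G).Adj (cls G x) (cls G r) :=
            twinGraph_adj_cls.mpr ⟨hABntw hxv hvr hrv, hxr⟩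
          have axy : (twinGraph G).Adj (cls G x) (cls G y) :=
            twinGraph_adj_cls.mpr ⟨hnxy, hAc x hxv y hyv hxy⟩
          have padjx : ∀ u1 ∈ (cls G x).1, ∀ u2 ∈ (cls G x).1, u1 ≠ u2 → G.Adj u1 u2 := by
            intro u1 hu1 u2 hu2 hne12
            exact hAc u1 (hmemx u1 hu1) u2 (hmemx u2 hu2) hne12
          have hmemy2 : ∀ u, twinRel G y u → G.Adj v u := by
            intro u h
            by_cases h1 : u = y
            · rw [h1]; exact hyv
            · exact hAclsy u h h1
          have padjy : ∀ u1 ∈ (cls G y).1, ∀ u2 ∈ (cls G y).1, u1 ≠ u2 → G.Adj u1 u2 := by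
            intro u1 hu1 u2 hu2 hne12
            exact hAc u1 (hmemy2 u1 hu1) u2 (hmemy2 u2 hu2) hne12
          have hmemBp : ∀ u, twinRel G p u → (¬ G.Adj v u ∧ u ≠ v) := by
            intro u h
            have h2 : u ≠ v := fun he => hnvp (twinRel_symm (he ▸ h))
            exact ⟨fun h' => (hABntw h' hvp hpv) (twinRel_symm h), h2⟩
          have padjp : ∀ u1 ∈ (cls G p).1, ∀ u2 ∈ (cls G p).1, u1 ≠ u2 → G.Adj u1 u2 := by
            intro u1 hu1 u2 hu2 hne12
            obtain ⟨g1, g2⟩ := hmemBp u1 hu1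
            obtain ⟨g3, g4⟩ := hmemBp u2 hu2
            exact hBc u1 g1 g2 u2 g3 g4 hne12
          have hmemBr : ∀ u, twinRel G r u → (¬ G.Adj v u ∧ u ≠ v) := by
            intro u h
            have h2 : u ≠ v := fun he => hnvr (twinRel_symm (he ▸ h))
            exact ⟨fun h' => (hABntw h' hvr hrv) (twinRel_symm h), h2⟩
          have padjr : ∀ u1 ∈ (cls G r).1, ∀ u2 ∈ (cls G r).1, u1 ≠ u2 → G.Adj u1 u2 := by
            intro u1 hu1 u2 hu2 hne12
            obtain ⟨g1, g2⟩ := hmemBr u1 hu1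
            obtain ⟨g3, g4⟩ := hmemBr u2 hu2
            exact hBc u1 g1 g2 u2 g3 g4 hne12
          have hclassv : ∀ u, twinRel G v u → u = v ∨ G.Adj v u := by
            intro u h
            by_cases h1 : u = v
            · exact Or.inl h1
            · exact Or.inr (hAcls u h h1)
          have padjv : ∀ u1 ∈ (cls G v).1, ∀ u2 ∈ (cls G v).1, u1 ≠ u2 → G.Adj u1 u2 := by
            intro u1 hu1 u2 hu2 hne12
            rcases hclassv u1 hu1 with rfl | h1
            · rcases hclassv u2 hu2 with rfl | h2
              · exact absurd rfl hne12
              · exact h2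
            · rcases hclassv u2 hu2 with rfl | h2
              · exact h1.symm
              · exact hAc u1 h1 u2 h2 hne12
          have hKp_false : (∀ b, ¬ G.Adj v b → ¬ twinRel G v b → ¬ G.Adj y b → b = p) →
              ¬ typeK G (cls G p) := by
            intro hPs hK
            obtain ⟨u, hu, hne'⟩ := typeK_elt hK
            obtain ⟨g1, g2⟩ := hmemBp u hu
            have h3 : ¬ G.Adj y u := fun h' =>
              hnyp (((twinRel_adj hu (Ne.symm hpy) (hABne hyv g1)).mpr h'.symm).symm)
            exact hne' (hPs u g1 (hBB' u g1 g2) h3)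
          have hKr_false : (∀ b, ¬ G.Adj v b → ¬ twinRel G v b → G.Adj y b → b = r) →
              ¬ typeK G (cls G r) := by
            intro hRs hK
            obtain ⟨u, hu, hne'⟩ := typeK_elt hK
            obtain ⟨g1, g2⟩ := hmemBr u hu
            have h3 : G.Adj y u :=
              ((twinRel_adj hu (Ne.symm hry) (hABne hyv g1)).mp hyr.symm).symm
            exact hne' (hRs u g1 (hBB' u g1 g2) h3)
          have hKy_false : (∀ u, twinRel G y u → u = y) → ¬ typeK G (cls G y) := by
            intro hYs hK
            obtain ⟨u, hu, hne'⟩ := typeK_elt hK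
            exact hne' (hYs u hu)
          have hKv_false : (∀ u, twinRel G v u → u = v) → ¬ typeK G (cls G v) := by
            intro hZe hK
            obtain ⟨u, hu, hne'⟩ := typeK_elt hK
            exact hne' (hZe u hu)
          right; right; left
          refine ⟨cls G x, cls G p, cls G r, cls G y, cls G v,
            cls_ne (hABntw hxv hvp hpv),
            cls_ne (hABntw hxv hvr hrv),
            cls_ne hnxy,
            cls_ne (fun h => hnvx (twinRel_symm h)),
            cls_ne hntpr,
            cls_ne (fun h => (hABntw hyv hvp hpv) (twinRel_symm h)),
            cls_ne (fun h => hnvp (twinRel_symm h)),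
            cls_ne (fun h => (hABntw hyv hvr hrv) (twinRel_symm h)),
            cls_ne (fun h => hnvr (twinRel_symm h)),
            cls_ne (fun h => hnvy (twinRel_symm h)),
            hcov, axp, apr, ary, ayv, avx, axr, axy,
            not_twinGraph_adj_cls (fun h => hnyp h.symm),
            not_twinGraph_adj_cls (fun h => hvp h.symm),
            not_twinGraph_adj_cls (fun h => hvr h.symm),
            type1K_of_adj padjp, type1K_of_adj padjr, type1K_of_adj padjy,
            type1K_of_adj padjv, ?_, ?_⟩
          · rintro X Y hne hnadj ⟨hKX, hKY⟩
            rcases hcov X with rfl | rfl | rfl | rfl | rfl <;>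
              rcases hcov Y with rfl | rfl | rfl | rfl | rfl
            · exact hne rfl
            · exact hnadj axp
            · exact hnadj axr
            · exact hnadj axy
            · exact hnadj avx.symm
            · exact hnadj axp.symm
            · exact hne rfl
            · exact hnadj apr
            · rcases hfact2 with hPs | ⟨hYs, _⟩
              · exact hKp_false hPs hKX
              · exact hKy_false hYs hKY
            · rcases hZfact with hZe | ⟨hPs, _⟩
              · exact hKv_false hZe hKY
              · exact hKp_false hPs hKX
            · exact hnadj axr.symm
            · exact hnadj apr.symm
            · exact hne rfl
            · exact hnadj ary
            · rcases hZfact with hZe | ⟨_, hRs⟩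
              · exact hKv_false hZe hKY
              · exact hKr_false hRs hKX
            · exact hnadj axy.symm
            · rcases hfact2 with hPs | ⟨hYs, _⟩
              · exact hKp_false hPs hKY
              · exact hKy_false hYs hKX
            · exact hnadj ary.symm
            · exact hne rfl
            · exact hnadj ayv
            · exact hnadj avx
            · rcases hZfact with hZe | ⟨hPs, _⟩
              · exact hKv_false hZe hKX
              · exact hKp_false hPs hKY
            · rcases hZfact with hZe | ⟨_, hRs⟩
              · exact hKv_false hZe hKX
              · exact hKr_false hRs hKY
            · exact hnadj ayv.symm
            · exact hne rfl
          · rintro X Y hadjXY ⟨hKX, hNY⟩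
            obtain ⟨hnt, hno⟩ := hNY
            obtain ⟨u1, hu1, u2, hu2, hne12⟩ := hnt
            rcases hcov Y with rfl | rfl | rfl | rfl | rfl
            · exact hno u1 hu1 u2 hu2 (padjx u1 hu1 u2 hu2 hne12)
            · exact hno u1 hu1 u2 hu2 (padjp u1 hu1 u2 hu2 hne12)
            · exact hno u1 hu1 u2 hu2 (padjr u1 hu1 u2 hu2 hne12)
            · exact hno u1 hu1 u2 hu2 (padjy u1 hu1 u2 hu2 hne12)
            · exact hno u1 hu1 u2 hu2 (padjv u1 hu1 u2 hu2 hne12)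

        · -- A empty : G5
          have hpr' : G.Adj p r := hBc p hvp hpv r hvr hrv hpr
          have hBnbr : ∀ u, G.Adj v u → ∃ b, ¬ G.Adj v b ∧ ¬ twinRel G v b ∧ G.Adj u b := by
            intro u hvu
            by_contra hcon
            push_neg at hcon
            have hup : ¬ G.Adj u p := fun h' => hcon p hvp hnvp h'
            obtain ⟨t, hut, htp⟩ := common_nbr hc hle (hABne hvu hvp) hup
            by_cases hvt : G.Adj v t
            · exact hAe u hvu t hvt hut
            · by_cases htv : t = v
              · rw [htv] at htp
                exact hvp htp
              · exact hcon t hvt (hBB' t hvt htv) hut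
          have hAonly : ∀ u, G.Adj v u → u = x ∨ u = y := by
            intro u hvu
            by_cases hux : u = x
            · exact Or.inl hux
            by_cases huy : u = y
            · exact Or.inr huy
            exfalso
            have hur : G.Adj u r := by
              obtain ⟨b, h1, h2, h3⟩ := hBnbr u hvu
              rcases hmax u hvu b h1 h2 h3 with h | h
              · exact (twinRel_adj h (Ne.symm (hABne hvu hvr)) hrx).mpr hxr
              · exact (twinRel_adj h (Ne.symm (hABne hvu hvr)) hry).mpr hyr
            have huv' : u ≠ v := (G.ne_of_adj hvu).symm
            rcases quad6 hc hle hbeta hvx hvy (Ne.symm hrv) hxy (Ne.symm hrx) (Ne.symm hry)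
              with H | H | H | H | H | H
            · exact hvp (((H p hpv hpx hpy hpr).mpr hxp.symm).symm)
            · exact hAe u hvu y hyv ((H u huv' hux huy (hABne hvu hvr)).mp hvu.symm)
            · exact hvp (((H p hpv hpx hpy hpr).mpr hpr').symm)
            · exact hnyp (((H p hpv hpx hpy hpr).mp hxp.symm).symm)
            · exact hAe u hvu x hxv ((H u huv' hux huy (hABne hvu hvr)).mpr hur)
            · exact hnyp (((H p hpv hpx hpy hpr).mpr hpr').symm)
          have hxsing : ∀ u, twinRel G x u → u = x := by
            intro u h
            by_cases h1 : u = v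
            · exact absurd (twinRel_symm (h1 ▸ h)) hnvx
            by_cases h2 : G.Adj v u
            · rcases hAonly u h2 with rfl | rfl
              · rfl
              · exact absurd h hnxy
            · exact absurd h (hABntw hxv h2 h1)
          have hysing : ∀ u, twinRel G y u → u = y := by
            intro u h
            by_cases h1 : u = v
            · exact absurd (twinRel_symm (h1 ▸ h)) hnvy
            by_cases h2 : G.Adj v u
            · rcases hAonly u h2 with rfl | rfl
              · exact absurd (twinRel_symm h) hnxy
              · rfl
            · exact absurd h (hABntw hyv h2 h1)
          have hvsing : ∀ u, twinRel G v u → u = v := by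
            intro u h
            by_cases h1 : u = v
            · exact h1
            by_cases h2 : G.Adj v u
            · rcases hAonly u h2 with rfl | rfl
              · exact absurd h hnvx
              · exact absurd h hnvy
            · exact absurd h (hBB' u h2 h1)
          have htwinR : ∀ b, ¬ G.Adj v b → ¬ twinRel G v b → G.Adj y b → twinRel G b r := by
            intro b hb hnb hyb
            by_cases hbr : b = r
            · exact hbr ▸ twinRel_refl _
            have hbv : b ≠ v := fun he => hnb (by rw [he]; exact twinRel_refl _)
            refine Or.inr (twins_iff.mpr ⟨hbr, fun t htb htr => ?_⟩)
            by_cases htv : t = v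
            · subst htv
              exact iff_of_false (fun h' => hb h'.symm) (fun h' => hvr h'.symm)
            by_cases hvt : G.Adj v t
            · rcases hAonly t hvt with rfl | rfl
              · exact iff_of_true (hallx b hb hnb).symm hxr.symm
              · exact iff_of_true hyb.symm hyr.symm
            · exact iff_of_true (hBc b hb hbv t hvt htv (Ne.symm htb))
                (hBc r hvr hrv t hvt htv (Ne.symm htr))
          have htwinP : ∀ b, ¬ G.Adj v b → ¬ twinRel G v b → ¬ G.Adj y b → twinRel G b p := by
            intro b hb hnb hnyb
            by_cases hbp : b = p
            · exact hbp ▸ twinRel_refl _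
            have hbv : b ≠ v := fun he => hnb (by rw [he]; exact twinRel_refl _)
            refine Or.inr (twins_iff.mpr ⟨hbp, fun t htb htp => ?_⟩)
            by_cases htv : t = v
            · subst htv
              exact iff_of_false (fun h' => hb h'.symm) (fun h' => hvp h'.symm)
            by_cases hvt : G.Adj v t
            · rcases hAonly t hvt with rfl | rfl
              · exact iff_of_true (hallx b hb hnb).symm hxp.symm
              · exact iff_of_false (fun h' => hnyb h'.symm) (fun h' => hnyp h'.symm)
            · exact iff_of_true (hBc b hb hbv t hvt htv (Ne.symm htb))
                (hBc p hvp hpv t hvt htv (Ne.symm htp))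
          have hcov : ∀ X : TwinVertex G, X = cls G x ∨ X = cls G p ∨ X = cls G r ∨
              X = cls G y ∨ X = cls G v := by
            intro X
            obtain ⟨u, rfl⟩ := cls_surj X
            by_cases huv : G.Adj v u
            · rcases hAonly u huv with rfl | rfl
              · exact Or.inl rfl
              · exact Or.inr (Or.inr (Or.inr (Or.inl rfl)))
            · by_cases huv2 : u = v
              · subst huv2
                exact Or.inr (Or.inr (Or.inr (Or.inr rfl)))
              · have hnu := hBB' u huv huv2
                by_cases hyu : G.Adj y u
                · exact Or.inr (Or.inr (Or.inl (cls_eq (htwinR u huv hnu hyu))))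
                · exact Or.inr (Or.inl (cls_eq (htwinP u huv hnu hyu)))
          have hntpr : ¬ twinRel G p r := fun h =>
            (ntw_of_wit (Ne.symm hry) (Ne.symm hpy) hyr.symm (fun h' => hnyp h'.symm))
              (twinRel_symm h)
          have hmemBp : ∀ u, twinRel G p u → (¬ G.Adj v u ∧ u ≠ v) := by
            intro u h
            have h2 : u ≠ v := fun he => hnvp (twinRel_symm (he ▸ h))
            exact ⟨fun h' => (hABntw h' hvp hpv) (twinRel_symm h), h2⟩
          have padjp : ∀ u1 ∈ (cls G p).1, ∀ u2 ∈ (cls G p).1, u1 ≠ u2 → G.Adj u1 u2 := by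
            intro u1 hu1 u2 hu2 hne12
            obtain ⟨g1, g2⟩ := hmemBp u1 hu1
            obtain ⟨g3, g4⟩ := hmemBp u2 hu2
            exact hBc u1 g1 g2 u2 g3 g4 hne12
          have hmemBr : ∀ u, twinRel G r u → (¬ G.Adj v u ∧ u ≠ v) := by
            intro u h
            have h2 : u ≠ v := fun he => hnvr (twinRel_symm (he ▸ h))
            exact ⟨fun h' => (hABntw h' hvr hrv) (twinRel_symm h), h2⟩
          have padjr : ∀ u1 ∈ (cls G r).1, ∀ u2 ∈ (cls G r).1, u1 ≠ u2 → G.Adj u1 u2 := by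
            intro u1 hu1 u2 hu2 hne12
            obtain ⟨g1, g2⟩ := hmemBr u1 hu1
            obtain ⟨g3, g4⟩ := hmemBr u2 hu2
            exact hBc u1 g1 g2 u2 g3 g4 hne12
          right; left
          refine ⟨cls G x, cls G p, cls G r, cls G y, cls G v,
            cls_ne (hABntw hxv hvp hpv),
            cls_ne (hABntw hxv hvr hrv),
            cls_ne hnxy,
            cls_ne (fun h => hnvx (twinRel_symm h)),
            cls_ne hntpr,
            cls_ne (fun h => (hABntw hyv hvp hpv) (twinRel_symm h)),
            cls_ne (fun h => hnvp (twinRel_symm h)),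
            cls_ne (fun h => (hABntw hyv hvr hrv) (twinRel_symm h)),
            cls_ne (fun h => hnvr (twinRel_symm h)),
            cls_ne (fun h => hnvy (twinRel_symm h)),
            hcov,
            twinGraph_adj_cls.mpr ⟨hABntw hxv hvp hpv, hxp⟩,
            twinGraph_adj_cls.mpr ⟨hntpr, hpr'⟩,
            twinGraph_adj_cls.mpr ⟨fun h => (hABntw hyv hvr hrv) (twinRel_symm h), hyr.symm⟩,
            twinGraph_adj_cls.mpr ⟨fun h => hnvy (twinRel_symm h), hyv.symm⟩,
            twinGraph_adj_cls.mpr ⟨hnvx, hxv⟩,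
            twinGraph_adj_cls.mpr ⟨hABntw hxv hvr hrv, hxr⟩,
            not_twinGraph_adj_cls (fun h => hnyp h.symm),
            not_twinGraph_adj_cls (fun h => hvp h.symm),
            not_twinGraph_adj_cls (fun h => hvr h.symm),
            typeOne_of hysing, typeOne_of hvsing,
            Or.inl (typeOne_of hxsing), type1K_of_adj padjp, type1K_of_adj padjr⟩

      · -- B empty : G7 (or contradictions)
        have hz : ∃ z, G.Adj v z ∧ ¬ G.Adj z r := by
          by_contra hcon
          push_neg at hcon
          apply hnvr
          refine Or.inr (twins_iff.mpr ⟨Ne.symm hrv, fun t htv htr => ?_⟩)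
          constructor
          · intro h
            exact (hcon t h).symm
          · intro h
            by_contra hnt
            exact hBe r hvr hrv t hnt htv h
        obtain ⟨z, hvz, hnzr⟩ := hz
        have hzv : z ≠ v := (G.ne_of_adj hvz).symm
        have hzx : z ≠ x := fun he => hnzr (by rw [he]; exact hxr)
        have hzy : z ≠ y := fun he => hnzr (by rw [he]; exact hyr)
        have hzr : z ≠ r := hABne hvz hvr
        have hzp : z ≠ p := hABne hvz hvp
        have hznoB : ∀ b, ¬ G.Adj v b → ¬ twinRel G v b → ¬ G.Adj z b := by
          intro b hb hnb hzb
          rcases hmax z hvz b hb hnb hzb with h | h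
          · exact hnzr ((twinRel_adj h (Ne.symm hzr) hrx).mpr hxr)
          · exact hnzr ((twinRel_adj h (Ne.symm hzr) hry).mpr hyr)
        have hnzp : ¬ G.Adj z p := hznoB p hvp hnvp
        by_cases hb0 : ∃ b0, ¬ G.Adj v b0 ∧ b0 ≠ v ∧ twinRel G v b0
        · exfalso
          obtain ⟨b0, hvb0, hb0v, htb0⟩ := hb0
          have hb0z : G.Adj b0 z := (twinRel_adj htb0 hzv (hABne hvz hvb0)).mp hvz
          have hb0x : b0 ≠ x := Ne.symm (hABne hxv hvb0)
          have hb0y : b0 ≠ y := Ne.symm (hABne hyv hvb0)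
          have hb0z' : b0 ≠ z := Ne.symm (hABne hvz hvb0)
          rcases quad6 hc hle hbeta hvx hvy (Ne.symm hzv) hxy (Ne.symm hzx) (Ne.symm hzy)
            with H | H | H | H | H | H
          · exact hvp (((H p hpv hpx hpy (Ne.symm hzp)).mpr hxp.symm).symm)
          · exact hvr (((H r hrv hrx hry (Ne.symm hzr)).mpr hyr.symm).symm)
          · exact hvb0 (((H b0 hb0v hb0x hb0y hb0z').mpr hb0z).symm)
          · exact hnyp (((H p hpv hpx hpy (Ne.symm hzp)).mp hxp.symm).symm)
          · exact hnzp (((H p hpv hpx hpy (Ne.symm hzp)).mp hxp.symm).symm)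
          · exact hnzr (((H r hrv hrx hry (Ne.symm hzr)).mp hyr.symm).symm)
        · push_neg at hb0
          have hAc : ∀ a, G.Adj v a → ∀ b, G.Adj v b → a ≠ b → G.Adj a b := by
            rcases hA with h | h
            · exact h
            · exfalso
              obtain ⟨t, hzt, htp⟩ := common_nbr hc hle hzp hnzp
              by_cases hvt : G.Adj v t
              · exact h z hvz t hvt hzt
              · by_cases hvt2 : t = v
                · rw [hvt2] at htp
                  exact hvp htp
                · exact hznoB t hvt (hb0 t hvt hvt2) hzt
          have htvz : twinRel G v z := by
            refine Or.inr (twins_iff.mpr ⟨Ne.symm hzv, fun t htv htz => ?_⟩)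
            constructor
            · intro h
              exact hAc z hvz t h (Ne.symm htz)
            · intro h
              by_contra hnt
              exact hznoB t hnt (hb0 t hnt htv) h
          have hRsing : ∀ b, ¬ G.Adj v b → ¬ twinRel G v b → G.Adj y b → b = r := by
            intro b hb hnb hyb
            by_contra hne
            have hbv : b ≠ v := fun he => hnb (by rw [he]; exact twinRel_refl _)
            have hbx : b ≠ x := Ne.symm (hABne hxv hb)
            have hby : b ≠ y := Ne.symm (hABne hyv hb)
            rcases quad6 hc hle hbeta hvx hvy (Ne.symm hrv) hxy (Ne.symm hrx) (Ne.symm hry)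
              with H | H | H | H | H | H
            · exact hvp (((H p hpv hpx hpy hpr).mpr hxp.symm).symm)
            · exact hb (((H b hbv hbx hby hne).mpr hyb.symm).symm)
            · exact hnzr ((H z hzv hzx hzy hzr).mp hvz.symm)
            · exact hnyp (((H p hpv hpx hpy hpr).mp hxp.symm).symm)
            · exact hnzr ((H z hzv hzx hzy hzr).mp (hAc z hvz x hxv hzx))
            · exact hnzr ((H z hzv hzx hzy hzr).mp (hAc z hvz y hyv hzy))
          have hPsing : ∀ b, ¬ G.Adj v b → ¬ twinRel G v b → ¬ G.Adj y b → b = p := by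
            intro b hb hnb hnyb
            by_contra hne
            have hbv : b ≠ v := fun he => hnb (by rw [he]; exact twinRel_refl _)
            have hbx : b ≠ x := Ne.symm (hABne hxv hb)
            have hby : b ≠ y := Ne.symm (hABne hyv hb)
            rcases quad6 hc hle hbeta hvx hvy (Ne.symm hpv) hxy (Ne.symm hpx) (Ne.symm hpy)
              with H | H | H | H | H | H
            · exact hvr (((H r hrv hrx hry (Ne.symm hpr)).mpr hxr.symm).symm)
            · exact hvr (((H r hrv hrx hry (Ne.symm hpr)).mpr hyr.symm).symm)
            · exact hnzp ((H z hzv hzx hzy hzp).mp hvz.symm)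
            · exact hnyb (((H b hbv hbx hby hne).mp (hallx b hb hnb).symm).symm)
            · exact hnzp ((H z hzv hzx hzy hzp).mp (hAc z hvz x hxv hzx))
            · exact hnzp ((H z hzv hzx hzy hzp).mp (hAc z hvz y hyv hzy))
          right; right; right
          have hclassv : ∀ u, twinRel G v u → u = v ∨ G.Adj v u := by
            intro u h
            by_cases h1 : u = v
            · exact Or.inl h1
            · refine Or.inr ?_
              by_contra h2
              exact hb0 u h2 h1 h
          have hmemx : ∀ u, twinRel G x u → G.Adj v u := by
            intro u h
            by_cases h1 : u = v
            · exact absurd (twinRel_symm (h1 ▸ h)) hnvx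
            · by_contra h2
              exact (hABntw hxv h2 h1) h
          have hmemy : ∀ u, twinRel G y u → G.Adj v u := by
            intro u h
            by_cases h1 : u = v
            · exact absurd (twinRel_symm (h1 ▸ h)) hnvy
            · by_contra h2
              exact (hABntw hyv h2 h1) h
          refine ⟨cls G x, cls G y, cls G v, cls G r, cls G p,
            cls_ne hnxy,
            cls_ne (fun h => hnvx (twinRel_symm h)),
            cls_ne (hABntw hxv hvr hrv),
            cls_ne (hABntw hxv hvp hpv),
            cls_ne (fun h => hnvy (twinRel_symm h)),
            cls_ne (hABntw hyv hvr hrv),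
            cls_ne (hABntw hyv hvp hpv),
            cls_ne hnvr,
            cls_ne hnvp,
            cls_ne (ntw_of_wit (Ne.symm hry) (Ne.symm hpy) hyr.symm (fun h => hnyp h.symm)),
            ?_, ?_, ?_, ?_, ?_, ?_, ?_, ?_, ?_, ?_, ?_, ?_, ?_, ?_, ?_, ?_⟩
          · intro X
            obtain ⟨u, rfl⟩ := cls_surj X
            by_cases huv : G.Adj v u
            · by_cases hub : ∃ b, ¬ G.Adj v b ∧ ¬ twinRel G v b ∧ G.Adj u b
              · obtain ⟨b, h1, h2, h3⟩ := hub
                rcases hmax u huv b h1 h2 h3 with h | h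
                · exact Or.inl (cls_eq h)
                · exact Or.inr (Or.inl (cls_eq h))
              · refine Or.inr (Or.inr (Or.inl (cls_eq (twinRel_symm ?_))))
                refine Or.inr (twins_iff.mpr ⟨Ne.symm (G.ne_of_adj huv).symm, fun t htv htu => ?_⟩)
                constructor
                · intro h
                  exact hAc u huv t h (Ne.symm htu)
                · intro h
                  by_contra hnt
                  exact hub ⟨t, hnt, hb0 t hnt htv, h⟩
            · by_cases huv2 : u = v
              · subst huv2
                exact Or.inr (Or.inr (Or.inl rfl))
              · have hnu := hb0 u huv huv2
                by_cases hyu : G.Adj y u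
                · have he := hRsing u huv hnu hyu
                  subst he
                  exact Or.inr (Or.inr (Or.inr (Or.inl rfl)))
                · have he := hPsing u huv hnu hyu
                  subst he
                  exact Or.inr (Or.inr (Or.inr (Or.inr rfl)))
          · exact twinGraph_adj_cls.mpr ⟨hnxy, hAc x hxv y hyv hxy⟩
          · exact twinGraph_adj_cls.mpr ⟨fun h => hnvx (twinRel_symm h), hxv.symm⟩
          · exact twinGraph_adj_cls.mpr ⟨hABntw hxv hvr hrv, hxr⟩
          · exact twinGraph_adj_cls.mpr ⟨fun h => hnvy (twinRel_symm h), hyv.symm⟩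
          · exact twinGraph_adj_cls.mpr ⟨hABntw hyv hvr hrv, hyr⟩
          · exact twinGraph_adj_cls.mpr ⟨hABntw hxv hvp hpv, hxp⟩
          · exact not_twinGraph_adj_cls hvr
          · exact not_twinGraph_adj_cls hnyp
          · exact not_twinGraph_adj_cls hvp
          · exact not_twinGraph_adj_cls (hBe r hvr hrv p hvp hpv)
          · refine typeOne_of ?_
            intro u h
            by_cases huv : G.Adj v u
            · exact absurd (twinRel_symm h) (hABntw huv hvp hpv)
            · by_cases huv2 : u = v
              · exact absurd (twinRel_symm (huv2 ▸ h)) hnvp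
              · have hnu := hb0 u huv huv2
                have hyu : ¬ G.Adj y u := by
                  intro hyu
                  exact hnyp (((twinRel_adj h (Ne.symm hpy) (hABne hyv huv)).mpr
                    hyu.symm).symm)
                exact hPsing u huv hnu hyu
          · refine type1K_of_adj ?_
            intro u1 hu1 u2 hu2 hne12
            exact hAc u1 (hmemx u1 hu1) u2 (hmemx u2 hu2) hne12
          · refine type1K_of_adj ?_
            intro u1 hu1 u2 hu2 hne12
            exact hAc u1 (hmemy u1 hu1) u2 (hmemy u2 hu2) hne12
          · refine typeK_of htvz hzv ?_
            intro u1 hu1 u2 hu2 hne12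
            rcases hclassv u1 hu1 with rfl | h1
            · rcases hclassv u2 hu2 with rfl | h2
              · exact absurd rfl hne12
              · exact h2
            · rcases hclassv u2 hu2 with rfl | h2
              · exact h1.symm
              · exact hAc u1 h1 u2 h2 hne12
          · refine typeOne_of ?_
            intro u h
            by_cases huv : G.Adj v u
            · exact absurd (twinRel_symm h) (hABntw huv hvr hrv)
            · by_cases huv2 : u = v
              · exact absurd (twinRel_symm (huv2 ▸ h)) hnvr
              · have hnu := hb0 u huv huv2
                have hyu : G.Adj y u :=
                  ((twinRel_adj h (Ne.symm hry) (hABne hyv huv)).mp hyr.symm).symm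
                exact hRsing u huv hnu hyu

  · -- CONFIG P,Q : G4 or G5
    push_neg at hr
    obtain ⟨q, hvq, hnvq, hyq, hnxq⟩ :
        ∃ q, ¬ G.Adj v q ∧ ¬ twinRel G v q ∧ G.Adj y q ∧ ¬ G.Adj x q :=
      ⟨by0, hvby, hnvby, hyby, fun h => hr by0 hvby hnvby h hyby⟩
    have hqv : q ≠ v := fun he => hnvq (by rw [he]; exact twinRel_refl _)
    have hqx : q ≠ x := Ne.symm (hABne hxv hvq)
    have hqy : q ≠ y := Ne.symm (hABne hyv hvq)
    have hpq : p ≠ q := fun he => hnxq (by rw [← he]; exact hxp)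
    have hBc : ∀ a, ¬ G.Adj v a → a ≠ v → ∀ b, ¬ G.Adj v b → b ≠ v → a ≠ b → G.Adj a b := by
      rcases hB with h | h
      · exact h
      · exfalso
        obtain ⟨t, htp, htq⟩ := common_nbr hc hle hpq (h p hvp hpv q hvq hqv)
        by_cases hvt : G.Adj v t
        · rcases hmax t hvt p hvp hnvp htp.symm with h2 | h2
          · exact hnxq ((twinRel_adj h2 (G.ne_of_adj htq).symm hqx).mp htq)
          · exact hnyp ((twinRel_adj h2 (G.ne_of_adj htp) hpy).mp htp.symm)
        · by_cases hvt2 : t = v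
          · rw [hvt2] at htq
            exact hvq htq
          · exact h t hvt hvt2 q hvq hqv htq
    have hqp' : G.Adj q p := hBc q hvq hqv p hvp hpv (Ne.symm hpq)
    have hBB' : ∀ b, ¬ G.Adj v b → b ≠ v → ¬ twinRel G v b := by
      intro b hb hbv h
      by_cases hbp : b = p
      · subst hbp
        have hbq : G.Adj b q := hBc b hb hbv q hvq hqv hpq
        exact hvq ((twinRel_adj h hqv (Ne.symm hpq)).mpr hbq)
      · have hbp' : G.Adj b p := hBc b hb hbv p hvp hpv hbp
        exact hvp ((twinRel_adj h hpv (Ne.symm hbp)).mpr hbp')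
    have hntqp : ¬ twinRel G q p := fun h =>
      (ntw_of_wit (Ne.symm hpx) (Ne.symm hqx) hxp.symm (fun h' => hnxq h'.symm)) (twinRel_symm h)
    have hmemBp : ∀ u, twinRel G p u → (¬ G.Adj v u ∧ u ≠ v) := by
      intro u h
      have h2 : u ≠ v := fun he => hnvp (twinRel_symm (he ▸ h))
      exact ⟨fun h' => (hABntw h' hvp hpv) (twinRel_symm h), h2⟩
    have hmemBq : ∀ u, twinRel G q u → (¬ G.Adj v u ∧ u ≠ v) := by
      intro u h
      have h2 : u ≠ v := fun he => hnvq (twinRel_symm (he ▸ h))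
      exact ⟨fun h' => (hABntw h' hvq hqv) (twinRel_symm h), h2⟩
    rcases hA with hAc | hAe
    · -- A complete : G5
      have hPsing : ∀ b, ¬ G.Adj v b → ¬ twinRel G v b → G.Adj x b → b = p := by
        intro b hb hnb hxb
        by_contra hne
        have hbv : b ≠ v := fun he => hnb (by rw [he]; exact twinRel_refl _)
        have hbx : b ≠ x := Ne.symm (hABne hxv hb)
        have hby : b ≠ y := Ne.symm (hABne hyv hb)
        rcases quad6 hc hle hbeta hvx hvy (Ne.symm hpv) hxy (Ne.symm hpx) (Ne.symm hpy)
          with H | H | H | H | H | H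
        · exact hb (((H b hbv hbx hby hne).mpr hxb.symm).symm)
        · exact hvq (((H q hqv hqx hqy (Ne.symm hpq)).mpr hyq.symm).symm)
        · exact hvq (((H q hqv hqx hqy (Ne.symm hpq)).mpr hqp').symm)
        · exact hnxq (((H q hqv hqx hqy (Ne.symm hpq)).mpr hyq.symm).symm)
        · exact hnxq ((H q hqv hqx hqy (Ne.symm hpq)).mpr hqp').symm
        · have hbp' : G.Adj b p := hBc b hb hbv p hvp hpv hne
          exact (hr b hb hnb hxb) ((H b hbv hbx hby hne).mpr hbp').symm
      have hQsing : ∀ b, ¬ G.Adj v b → ¬ twinRel G v b → G.Adj y b → b = q := by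
        intro b hb hnb hyb
        by_contra hne
        have hbv : b ≠ v := fun he => hnb (by rw [he]; exact twinRel_refl _)
        have hbx : b ≠ x := Ne.symm (hABne hxv hb)
        have hby : b ≠ y := Ne.symm (hABne hyv hb)
        have hxb : ¬ G.Adj x b := by
          intro hxb
          exact (hr b hb hnb hxb) hyb
        rcases quad6 hc hle hbeta hvy hvx (Ne.symm hqv) (Ne.symm hxy) (Ne.symm hqy)
          (Ne.symm hqx) with H | H | H | H | H | H
        · exact hb (((H b hbv hby hbx hne).mpr hyb.symm).symm)
        · exact hvp (((H p hpv hpy hpx hpq).mpr hxp.symm).symm)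
        · exact hvp (((H p hpv hpy hpx hpq).mpr hqp'.symm).symm)
        · exact hnyp (((H p hpv hpy hpx hpq).mpr hxp.symm).symm)
        · exact hnyp ((H p hpv hpy hpx hpq).mpr hqp'.symm).symm
        · have hbq' : G.Adj b q := hBc b hb hbv q hvq hqv hne
          exact hxb ((H b hbv hby hbx hne).mpr hbq').symm
      have hAcls : ∀ u, twinRel G v u → u ≠ v → G.Adj v u := by
        intro u h hne
        by_contra h2
        exact hBB' u h2 hne h
      have hclassv : ∀ u, twinRel G v u → u = v ∨ G.Adj v u := by
        intro u h
        by_cases h1 : u = v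
        · exact Or.inl h1
        · exact Or.inr (hAcls u h h1)
      have padjv : ∀ u1 ∈ (cls G v).1, ∀ u2 ∈ (cls G v).1, u1 ≠ u2 → G.Adj u1 u2 := by
        intro u1 hu1 u2 hu2 hne12
        rcases hclassv u1 hu1 with rfl | h1
        · rcases hclassv u2 hu2 with rfl | h2
          · exact absurd rfl hne12
          · exact h2
        · rcases hclassv u2 hu2 with rfl | h2
          · exact h1.symm
          · exact hAc u1 h1 u2 h2 hne12
      have hmemx : ∀ u, twinRel G x u → G.Adj v u := by
        intro u h
        by_cases h1 : u = v
        · exact absurd (twinRel_symm (h1 ▸ h)) hnvx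
        · by_contra h2
          exact (hABntw hxv h2 h1) h
      have hmemy : ∀ u, twinRel G y u → G.Adj v u := by
        intro u h
        by_cases h1 : u = v
        · exact absurd (twinRel_symm (h1 ▸ h)) hnvy
        · by_contra h2
          exact (hABntw hyv h2 h1) h
      have padjx : ∀ u1 ∈ (cls G x).1, ∀ u2 ∈ (cls G x).1, u1 ≠ u2 → G.Adj u1 u2 := by
        intro u1 hu1 u2 hu2 hne12
        exact hAc u1 (hmemx u1 hu1) u2 (hmemx u2 hu2) hne12
      have padjy : ∀ u1 ∈ (cls G y).1, ∀ u2 ∈ (cls G y).1, u1 ≠ u2 → G.Adj u1 u2 := by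
        intro u1 hu1 u2 hu2 hne12
        exact hAc u1 (hmemy u1 hu1) u2 (hmemy u2 hu2) hne12
      have hPone : ∀ u, twinRel G p u → u = p := by
        intro u h
        obtain ⟨g1, g2⟩ := hmemBp u h
        have hxu : G.Adj x u :=
          ((twinRel_adj h (Ne.symm hpx) (hABne hxv g1)).mp hxp.symm).symm
        exact hPsing u g1 (hBB' u g1 g2) hxu
      have hQone : ∀ u, twinRel G q u → u = q := by
        intro u h
        obtain ⟨g1, g2⟩ := hmemBq u h
        have hyu : G.Adj y u :=
          ((twinRel_adj h (Ne.symm hqy) (hABne hyv g1)).mp hyq.symm).symm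
        exact hQsing u g1 (hBB' u g1 g2) hyu
      have hcov : ∀ X : TwinVertex G, X = cls G x ∨ X = cls G v ∨ X = cls G y ∨
          X = cls G q ∨ X = cls G p := by
        intro X
        obtain ⟨u, rfl⟩ := cls_surj X
        by_cases huv : G.Adj v u
        · by_cases hub : ∃ b, ¬ G.Adj v b ∧ ¬ twinRel G v b ∧ G.Adj u b
          · obtain ⟨b, h1, h2, h3⟩ := hub
            rcases hmax u huv b h1 h2 h3 with h | h
            · exact Or.inl (cls_eq h)
            · exact Or.inr (Or.inr (Or.inl (cls_eq h)))
          · refine Or.inr (Or.inl (cls_eq (twinRel_symm ?_)))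
            refine Or.inr (twins_iff.mpr ⟨Ne.symm (G.ne_of_adj huv).symm,
              fun t htv htu => ?_⟩)
            constructor
            · intro h
              exact hAc u huv t h (Ne.symm htu)
            · intro h
              by_contra hnt
              exact hub ⟨t, hnt, hBB' t hnt htv, h⟩
        · by_cases huv2 : u = v
          · subst huv2
            exact Or.inr (Or.inl rfl)
          · have hnu := hBB' u huv huv2
            by_cases hxu : G.Adj x u
            · have he := hPsing u huv hnu hxu
              subst he
              exact Or.inr (Or.inr (Or.inr (Or.inr rfl)))
            · have hyu : G.Adj y u := (sb u huv hnu).resolve_left hxu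
              have he := hQsing u huv hnu hyu
              subst he
              exact Or.inr (Or.inr (Or.inr (Or.inl rfl)))
      right; left
      refine ⟨cls G x, cls G v, cls G y, cls G q, cls G p,
        cls_ne (fun h => hnvx (twinRel_symm h)),
        cls_ne hnxy,
        cls_ne (hABntw hxv hvq hqv),
        cls_ne (hABntw hxv hvp hpv),
        cls_ne hnvy,
        cls_ne hnvq,
        cls_ne hnvp,
        cls_ne (hABntw hyv hvq hqv),
        cls_ne (hABntw hyv hvp hpv),
        cls_ne hntqp,
        hcov,
        twinGraph_adj_cls.mpr ⟨fun h => hnvx (twinRel_symm h), hxv.symm⟩,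
        twinGraph_adj_cls.mpr ⟨hnvy, hyv⟩,
        twinGraph_adj_cls.mpr ⟨hABntw hyv hvq hqv, hyq⟩,
        twinGraph_adj_cls.mpr ⟨hntqp, hqp'⟩,
        twinGraph_adj_cls.mpr ⟨fun h => (hABntw hxv hvp hpv) (twinRel_symm h), hxp.symm⟩,
        twinGraph_adj_cls.mpr ⟨hnxy, hAc x hxv y hyv hxy⟩,
        not_twinGraph_adj_cls hvq,
        not_twinGraph_adj_cls hvp,
        not_twinGraph_adj_cls hnyp,
        typeOne_of hQone, typeOne_of hPone,
        type1K_of_adj padjx, type1K_of_adj padjv, type1K_of_adj padjy⟩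
    · -- A empty : G4
      have hPX : (∀ b, ¬ G.Adj v b → ¬ twinRel G v b → G.Adj x b → b = p) ∧
          (∀ u, twinRel G x u → u = x) := by
        rcases quad6 hc hle hbeta hvx hvy (Ne.symm hpv) hxy (Ne.symm hpx) (Ne.symm hpy)
          with H | H | H | H | H | H
        · constructor
          · intro b hb hnb hxb
            by_contra hne
            have hbv : b ≠ v := fun he => hnb (by rw [he]; exact twinRel_refl _)
            exact hb (((H b hbv (Ne.symm (hABne hxv hb)) (Ne.symm (hABne hyv hb))
              hne).mpr hxb.symm).symm)
          · intro u h
            by_cases h1 : u = v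
            · exact absurd (twinRel_symm (h1 ▸ h)) hnvx
            by_cases h2 : G.Adj v u
            · by_contra hne
              have huy : u ≠ y := fun he => hnxy (he ▸ h)
              have hux : G.Adj u x := (H u (G.ne_of_adj h2).symm hne huy
                (hABne h2 hvp)).mp h2.symm
              exact hAe u h2 x hxv hux
            · exact absurd h (hABntw hxv h2 h1)
        · exact absurd (((H q hqv hqx hqy (Ne.symm hpq)).mpr hyq.symm).symm) hvq
        · exact absurd (((H q hqv hqx hqy (Ne.symm hpq)).mpr hqp').symm) hvq
        · exact absurd (((H q hqv hqx hqy (Ne.symm hpq)).mpr hyq.symm).symm) hnxq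
        · exact absurd (((H q hqv hqx hqy (Ne.symm hpq)).mpr hqp').symm) hnxq
        · constructor
          · intro b hb hnb hxb
            by_contra hne
            have hbv : b ≠ v := fun he => hnb (by rw [he]; exact twinRel_refl _)
            have hbp' : G.Adj b p := hBc b hb hbv p hvp hpv hne
            exact (hr b hb hnb hxb) ((H b hbv (Ne.symm (hABne hxv hb))
              (Ne.symm (hABne hyv hb)) hne).mpr hbp').symm
          · intro u h
            by_cases h1 : u = v
            · exact absurd (twinRel_symm (h1 ▸ h)) hnvx
            by_cases h2 : G.Adj v u
            · by_contra hne
              have huy : u ≠ y := fun he => hnxy (he ▸ h)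
              have hup : G.Adj u p :=
                ((twinRel_adj h hpx (Ne.symm (hABne h2 hvp))).mp hxp).symm.symm
              exact hAe u h2 y hyv ((H u (G.ne_of_adj h2).symm hne huy
                (hABne h2 hvp)).mpr hup)
            · exact absurd h (hABntw hxv h2 h1)
      have hQY : (∀ b, ¬ G.Adj v b → ¬ twinRel G v b → G.Adj y b → b = q) ∧
          (∀ u, twinRel G y u → u = y) := by
        rcases quad6 hc hle hbeta hvy hvx (Ne.symm hqv) (Ne.symm hxy) (Ne.symm hqy)
          (Ne.symm hqx) with H | H | H | H | H | H
        · constructor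
          · intro b hb hnb hyb
            by_contra hne
            have hbv : b ≠ v := fun he => hnb (by rw [he]; exact twinRel_refl _)
            exact hb (((H b hbv (Ne.symm (hABne hyv hb)) (Ne.symm (hABne hxv hb))
              hne).mpr hyb.symm).symm)
          · intro u h
            by_cases h1 : u = v
            · exact absurd (twinRel_symm (h1 ▸ h)) hnvy
            by_cases h2 : G.Adj v u
            · by_contra hne
              have hux : u ≠ x := fun he => hnxy (twinRel_symm (he ▸ h))
              have huy' : G.Adj u y := (H u (G.ne_of_adj h2).symm hne hux
                (hABne h2 hvq)).mp h2.symm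
              exact hAe u h2 y hyv huy'
            · exact absurd h (hABntw hyv h2 h1)
        · exact absurd (((H p hpv hpy hpx hpq).mpr hxp.symm).symm) hvp
        · exact absurd (((H p hpv hpy hpx hpq).mpr hqp'.symm).symm) hvp
        · exact absurd (((H p hpv hpy hpx hpq).mpr hxp.symm).symm) hnyp
        · exact absurd ((H p hpv hpy hpx hpq).mpr hqp'.symm).symm hnyp
        · constructor
          · intro b hb hnb hyb
            by_contra hne
            have hbv : b ≠ v := fun he => hnb (by rw [he]; exact twinRel_refl _)
            have hbq' : G.Adj b q := hBc b hb hbv q hvq hqv hne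
            have hxb : ¬ G.Adj x b := fun hxb => (hr b hb hnb hxb) hyb
            exact hxb ((H b hbv (Ne.symm (hABne hyv hb)) (Ne.symm (hABne hxv hb))
              hne).mpr hbq').symm
          · intro u h
            by_cases h1 : u = v
            · exact absurd (twinRel_symm (h1 ▸ h)) hnvy
            by_cases h2 : G.Adj v u
            · by_contra hne
              have hux : u ≠ x := fun he => hnxy (twinRel_symm (he ▸ h))
              have huq : G.Adj u q :=
                ((twinRel_adj h hqy (Ne.symm (hABne h2 hvq))).mp hyq).symm.symm
              exact hAe u h2 x hxv ((H u (G.ne_of_adj h2).symm hne hux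
                (hABne h2 hvq)).mpr huq)
            · exact absurd h (hABntw hyv h2 h1)
      obtain ⟨hPsing, hxsing⟩ := hPX
      obtain ⟨hQsing, hysing⟩ := hQY
      have hBnbr : ∀ u, G.Adj v u → ∃ b, ¬ G.Adj v b ∧ ¬ twinRel G v b ∧ G.Adj u b := by
        intro u hvu
        by_contra hcon
        push_neg at hcon
        have hup : ¬ G.Adj u p := fun h' => hcon p hvp hnvp h'
        obtain ⟨t, hut, htp⟩ := common_nbr hc hle (hABne hvu hvp) hup
        by_cases hvt : G.Adj v t
        · exact hAe u hvu t hvt hut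
        · by_cases htv : t = v
          · rw [htv] at htp
            exact hvp htp
          · exact hcon t hvt (hBB' t hvt htv) hut
      have hAonly : ∀ u, G.Adj v u → u = x ∨ u = y := by
        intro u hvu
        obtain ⟨b, h1, h2, h3⟩ := hBnbr u hvu
        rcases hmax u hvu b h1 h2 h3 with h | h
        · exact Or.inl (hxsing u (twinRel_symm h))
        · exact Or.inr (hysing u (twinRel_symm h))
      have hvsing : ∀ u, twinRel G v u → u = v := by
        intro u h
        by_cases h1 : u = v
        · exact h1
        by_cases h2 : G.Adj v u
        · rcases hAonly u h2 with rfl | rfl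
          · exact absurd h hnvx
          · exact absurd h hnvy
        · exact absurd h (hBB' u h2 h1)
      have hPone : ∀ u, twinRel G p u → u = p := by
        intro u h
        obtain ⟨g1, g2⟩ := hmemBp u h
        have hxu : G.Adj x u :=
          ((twinRel_adj h (Ne.symm hpx) (hABne hxv g1)).mp hxp.symm).symm
        exact hPsing u g1 (hBB' u g1 g2) hxu
      have hQone : ∀ u, twinRel G q u → u = q := by
        intro u h
        obtain ⟨g1, g2⟩ := hmemBq u h
        have hyu : G.Adj y u :=
          ((twinRel_adj h (Ne.symm hqy) (hABne hyv g1)).mp hyq.symm).symm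
        exact hQsing u g1 (hBB' u g1 g2) hyu
      have hcov : ∀ X : TwinVertex G, X = cls G v ∨ X = cls G x ∨ X = cls G p ∨
          X = cls G q ∨ X = cls G y := by
        intro X
        obtain ⟨u, rfl⟩ := cls_surj X
        by_cases huv : G.Adj v u
        · rcases hAonly u huv with rfl | rfl
          · exact Or.inr (Or.inl rfl)
          · exact Or.inr (Or.inr (Or.inr (Or.inr rfl)))
        · by_cases huv2 : u = v
          · subst huv2
            exact Or.inl rfl
          · have hnu := hBB' u huv huv2
            by_cases hxu : G.Adj x u
            · have he := hPsing u huv hnu hxu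
              subst he
              exact Or.inr (Or.inr (Or.inl rfl))
            · have hyu : G.Adj y u := (sb u huv hnu).resolve_left hxu
              have he := hQsing u huv hnu hyu
              subst he
              exact Or.inr (Or.inr (Or.inr (Or.inl rfl)))
      left
      refine ⟨cls G v, cls G x, cls G p, cls G q, cls G y,
        cls_ne hnvx,
        cls_ne hnvp,
        cls_ne hnvq,
        cls_ne hnvy,
        cls_ne (hABntw hxv hvp hpv),
        cls_ne (hABntw hxv hvq hqv),
        cls_ne hnxy,
        cls_ne (fun h => hntqp (twinRel_symm h)),
        cls_ne (fun h => (hABntw hyv hvp hpv) (twinRel_symm h)),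
        cls_ne (fun h => (hABntw hyv hvq hqv) (twinRel_symm h)),
        hcov,
        twinGraph_adj_cls.mpr ⟨hnvx, hxv⟩,
        twinGraph_adj_cls.mpr ⟨hABntw hxv hvp hpv, hxp⟩,
        twinGraph_adj_cls.mpr ⟨fun h => hntqp (twinRel_symm h), hqp'.symm⟩,
        twinGraph_adj_cls.mpr ⟨fun h => (hABntw hyv hvq hqv) (twinRel_symm h), hyq.symm⟩,
        twinGraph_adj_cls.mpr ⟨fun h => hnvy (twinRel_symm h), hyv.symm⟩,
        not_twinGraph_adj_cls hvp,
        not_twinGraph_adj_cls hnxq,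
        not_twinGraph_adj_cls (fun h => hnyp h.symm),
        not_twinGraph_adj_cls (fun h => hvq h.symm),
        not_twinGraph_adj_cls (hAe y hyv x hxv),
        ?_⟩
      intro X
      rcases hcov X with rfl | rfl | rfl | rfl | rfl
      · exact typeOne_of hvsing
      · exact typeOne_of hxsing
      · exact typeOne_of hPone
      · exact typeOne_of hQone
      · exact typeOne_of hysing


end Core
/-- If `G` is connected of order `n`, `diam(G) = 2`, `β(G) = n - 3`, `v` is a
vertex with `Γ_2^*(v^*) ≠ ∅` and `Γ_1(v)` homogeneous, `|R_1^*(v^*)| = 2`, and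
`Γ_2(v)` is homogeneous, then the twin graph satisfies one of the structures
`G_4`, `G_5`, `G_6`, `G_7`. -/
theorem structures_of_R1Star_card_two_homogeneous
    {V : Type*} [Fintype V] (G : SimpleGraph V)
    (hdiam : diamEq G 2)
    (hbeta : metricDim G = Fintype.card V - 3)
    (v : V) (h2 : (GammaStar G 2 v).Nonempty)
    (hhom : Homogeneous G (Gamma G 1 v))
    (hR1 : (R1Star G v).ncard = 2)
    (hhom2 : Homogeneous G (Gamma G 2 v)) :
    structG4 G ∨ structG5 G ∨ structG6 G ∨ structG7 G := by
  classical
  obtain ⟨hc, hle, -⟩ := hdiam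
  have hmem1 : ∀ a, G.Adj v a → a ∈ Gamma G 1 v := fun a ha =>
    SimpleGraph.dist_eq_one_iff_adj.mpr ha.symm
  have hmem2 : ∀ a, ¬ G.Adj v a → a ≠ v → a ∈ Gamma G 2 v := fun a h1 hne =>
    dist_two hc hle hne (fun h => h1 h.symm)
  have hA : (∀ a, G.Adj v a → ∀ b, G.Adj v b → a ≠ b → G.Adj a b) ∨
      (∀ a, G.Adj v a → ∀ b, G.Adj v b → ¬ G.Adj a b) := by
    rcases hhom with h | h
    · exact Or.inl (fun a ha b hb hne => h a (hmem1 a ha) b (hmem1 b hb) hne)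
    · exact Or.inr (fun a ha b hb => h a (hmem1 a ha) b (hmem1 b hb))
  have hB : (∀ a, ¬ G.Adj v a → a ≠ v → ∀ b, ¬ G.Adj v b → b ≠ v → a ≠ b → G.Adj a b) ∨
      (∀ a, ¬ G.Adj v a → a ≠ v → ∀ b, ¬ G.Adj v b → b ≠ v → ¬ G.Adj a b) := by
    rcases hhom2 with h | h
    · exact Or.inl (fun a h1 h2 b h3 h4 hne => h a (hmem2 a h1 h2) b (hmem2 b h3 h4) hne)
    · exact Or.inr (fun a h1 h2 b h3 h4 => h a (hmem2 a h1 h2) b (hmem2 b h3 h4))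
  rw [Set.ncard_eq_two] at hR1
  obtain ⟨A1, A2, hne12, hpair⟩ := hR1
  have hm1 : A1 ∈ R1Star G v := by
    rw [hpair]
    exact Set.mem_insert _ _
  have hm2 : A2 ∈ R1Star G v := by
    rw [hpair]
    exact Set.mem_insert_of_mem _ rfl
  have extract : ∀ A : TwinVertex G, A ∈ R1Star G v → ∃ a, A = cls G a ∧ G.Adj v a ∧
      ∃ b, ¬ G.Adj v b ∧ ¬ twinRel G v b ∧ G.Adj a b := by
    intro A hm
    obtain ⟨hd1, B1, hd2, hadj⟩ := hm
    obtain ⟨a, rfl⟩ := cls_surj A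
    obtain ⟨b, rfl⟩ := cls_surj B1
    have h1 : (twinGraph G).Adj (cls G a) (cls G v) :=
      SimpleGraph.dist_eq_one_iff_adj.mp hd1
    obtain ⟨hnt_av, hadj_av⟩ := twinGraph_adj_cls.mp h1
    have hd2' : (twinGraph G).dist (cls G b) (cls G v) = 2 := hd2
    have hnvb : ¬ twinRel G v b := by
      intro h
      have he : cls G b = cls G v := (cls_eq h).symm
      rw [he, SimpleGraph.dist_self] at hd2'
      exact absurd hd2' (by norm_num)
    have hnadj_bv : ¬ G.Adj b v := by
      intro h
      have h1' : (twinGraph G).dist (cls G b) (cls G v) = 1 :=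
        SimpleGraph.dist_eq_one_iff_adj.mpr
          (twinGraph_adj_cls.mpr ⟨fun ht => hnvb (twinRel_symm ht), h⟩)
      rw [h1'] at hd2'
      exact absurd hd2' (by norm_num)
    obtain ⟨hnt_ab, hadj_ab⟩ := twinGraph_adj_cls.mp hadj
    exact ⟨a, rfl, hadj_av.symm, b, fun h => hnadj_bv h.symm, hnvb, hadj_ab⟩
  obtain ⟨x, hA1eq, hxv', b1, hb11, hb12, hb13⟩ := extract A1 hm1
  obtain ⟨y, hA2eq, hyv', b2, hb21, hb22, hb23⟩ := extract A2 hm2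
  have hnxy : ¬ twinRel G x y := fun h => hne12 (by rw [hA1eq, hA2eq]; exact cls_eq h)
  have hxy : x ≠ y := fun he => hnxy (by rw [he]; exact twinRel_refl _)
  have hmax : ∀ a, G.Adj v a → ∀ b, ¬ G.Adj v b → ¬ twinRel G v b → G.Adj a b →
      twinRel G a x ∨ twinRel G a y := by
    intro a ha b h1 h2 h3
    have hbv : b ≠ v := fun he => h2 (by rw [he]; exact twinRel_refl _)
    have hba : b ≠ a := (G.ne_of_adj h3).symm
    have hnta_v : ¬ twinRel G v a := fun h => h1 ((twinRel_adj h hbv hba).mpr h3)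
    have hnt_ba : ¬ twinRel G b a := fun h =>
      h1 (((twinRel_adj h (Ne.symm hbv) (G.ne_of_adj ha)).mpr ha.symm).symm)
    have hadj_av : (twinGraph G).Adj (cls G a) (cls G v) :=
      twinGraph_adj_cls.mpr ⟨fun h => hnta_v (twinRel_symm h), ha.symm⟩
    have hadj_ba : (twinGraph G).Adj (cls G b) (cls G a) :=
      twinGraph_adj_cls.mpr ⟨hnt_ba, h3.symm⟩
    have hmem : cls G a ∈ R1Star G v := by
      refine ⟨SimpleGraph.dist_eq_one_iff_adj.mpr hadj_av, cls G b, ?_, hadj_ba.symm⟩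
      show (twinGraph G).dist (cls G b) (cls G v) = 2
      have hw : ((hadj_ba.toWalk).append hadj_av.toWalk).length = 2 := by
        simp
      have hle2 : (twinGraph G).dist (cls G b) (cls G v) ≤ 2 := by
        rw [← hw]
        exact SimpleGraph.dist_le _
      have h0 : (twinGraph G).dist (cls G b) (cls G v) ≠ 0 := by
        intro hz
        rcases SimpleGraph.dist_eq_zero_iff_eq_or_not_reachable.mp hz with he | hnr
        · exact h2 (cls_eq_iff.mp he.symm)
        · exact hnr ⟨(hadj_ba.toWalk).append hadj_av.toWalk⟩
      have h1' : (twinGraph G).dist (cls G b) (cls G v) ≠ 1 := by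
        intro ho
        have := twinGraph_adj_cls.mp (SimpleGraph.dist_eq_one_iff_adj.mp ho)
        exact h1 this.2.symm
      omega
    rw [hpair] at hmem
    rcases hmem with he | he
    · exact Or.inl (cls_eq_iff.mp (he.trans hA1eq))
    · exact Or.inr (cls_eq_iff.mp (he.trans hA2eq))
  by_cases hPex : ∃ p, ¬ G.Adj v p ∧ ¬ twinRel G v p ∧ G.Adj x p ∧ ¬ G.Adj y p
  · exact core hc hle hbeta hA hB hxv' hyv' hnxy hmax ⟨b2, hb21, hb22, hb23⟩ hPex
  by_cases hQex : ∃ p, ¬ G.Adj v p ∧ ¬ twinRel G v p ∧ G.Adj y p ∧ ¬ G.Adj x p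
  · exact core hc hle hbeta hA hB hyv' hxv' (fun h => hnxy (twinRel_symm h))
      (fun a ha b g1 g2 g3 => (hmax a ha b g1 g2 g3).symm) ⟨b1, hb11, hb12, hb13⟩ hQex
  push_neg at hPex hQex
  exfalso
  apply hnxy
  refine Or.inr (twins_iff.mpr ⟨hxy, fun t htx hty => ?_⟩)
  by_cases h1 : t = v
  · subst h1
    exact iff_of_true hxv'.symm hyv'.symm
  by_cases h2 : G.Adj v t
  · rcases hA with hAc | hAe
    · exact iff_of_true (hAc x hxv' t h2 (Ne.symm htx)) (hAc y hyv' t h2 (Ne.symm hty))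
    · exact iff_of_false (hAe x hxv' t h2) (hAe y hyv' t h2)
  · by_cases h3 : twinRel G v t
    · constructor
      · intro _
        exact ((twinRel_adj h3 (Ne.symm (G.ne_of_adj hyv')) (Ne.symm hty)).mp hyv').symm
      · intro _
        exact ((twinRel_adj h3 (Ne.symm (G.ne_of_adj hxv')) (Ne.symm htx)).mp hxv').symm
    · exact ⟨fun h => hPex t h2 h3 h, fun h => hQex t h2 h3 h⟩

end PaperMetricDim
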